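/- arXiv:1604.03861 — 9 statements merged into one kernel-verified Lean document; each statement's English description precedes it below -/
import Mathlib

section
/- Let T be a finite tree of order at least 2 that is not a path. Then every exterior major vertex u of T with terminal degree at least 2 is adjacent to each of its terminal vertices if and only if every path joining two leaves of T at distance greater than 2 contains at least two major vertices. -/
open SimpleGraph

variable {V : Type*}

/-- `S` is a resolving set of `G`. -/
def isResolvingSet (G : SimpleGraph V) (S : Set V) : Prop :=
  ∀ x y : V, x ≠ y → ∃ u ∈ S, G.dist u x ≠ G.dist u y

/-- `S` is a dominating set of `G`. -/
def isDominatingSet (G : SimpleGraph V) (S : Set V) : Prop :=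
  ∀ x : V, x ∉ S → ∃ u ∈ S, G.Adj u x

/-- `S` is a metric-locating-dominating set of `G`. -/
def isMLDSet (G : SimpleGraph V) (S : Set V) : Prop :=
  isResolvingSet G S ∧ isDominatingSet G S

/-- `S` is a locating-dominating set of `G`. -/
def isLDSet (G : SimpleGraph V) (S : Set V) : Prop :=
  isDominatingSet G S ∧
    ∀ x ∉ S, ∀ y ∉ S, x ≠ y → G.neighborSet x ∩ S ≠ G.neighborSet y ∩ S

/-- vertices `u` and `v` doubly resolve the pair `{x, y}`. -/
def doublyResolves (G : SimpleGraph V) (u v x y : V) : Prop :=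
  (G.dist u x : ℤ) - (G.dist u y : ℤ) ≠ (G.dist v x : ℤ) - (G.dist v y : ℤ)

/-- the set `S` doubly resolves the pair `{x, y}`. -/
def setDoublyResolves (G : SimpleGraph V) (S : Set V) (x y : V) : Prop :=
  ∃ u ∈ S, ∃ v ∈ S, doublyResolves G u v x y

/-- `S` is a doubly resolving set of `G`. -/
def isDoublyResolvingSet (G : SimpleGraph V) (S : Set V) : Prop :=
  ∀ x y : V, x ≠ y → setDoublyResolves G S x y

/-- the metric dimension `dim G`. -/
noncomputable def metricDim (G : SimpleGraph V) : ℕ :=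
  sInf {n | ∃ S : Set V, isResolvingSet G S ∧ S.ncard = n}

/-- the domination number `γ(G)`. -/
noncomputable def domNum (G : SimpleGraph V) : ℕ :=
  sInf {n | ∃ S : Set V, isDominatingSet G S ∧ S.ncard = n}

/-- the metric-location-domination number `γ_M(G)`. -/
noncomputable def mldNum (G : SimpleGraph V) : ℕ :=
  sInf {n | ∃ S : Set V, isMLDSet G S ∧ S.ncard = n}

/-- the location-domination number `γ_L(G)`. -/
noncomputable def ldNum (G : SimpleGraph V) : ℕ :=
  sInf {n | ∃ S : Set V, isLDSet G S ∧ S.ncard = n}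

/-- the minimum cardinality `ψ(G)` of a doubly resolving set. -/
noncomputable def psiNum (G : SimpleGraph V) : ℕ :=
  sInf {n | ∃ S : Set V, isDoublyResolvingSet G S ∧ S.ncard = n}

/-- a leaf: a vertex of degree 1. -/
def isLeaf (G : SimpleGraph V) (x : V) : Prop := (G.neighborSet x).ncard = 1

/-- a support vertex: a vertex adjacent to some leaf. -/
def isSupport (G : SimpleGraph V) (u : V) : Prop := ∃ x, isLeaf G x ∧ G.Adj u x

/-- a strong support vertex: a vertex adjacent to at least two leaves. -/
def isStrongSupport (G : SimpleGraph V) (u : V) : Prop :=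
  2 ≤ {x | isLeaf G x ∧ G.Adj u x}.ncard

/-- `ℓ(G)`: the number of leaves. -/
noncomputable def numLeaves (G : SimpleGraph V) : ℕ := {x | isLeaf G x}.ncard

/-- `ℓ'(G)`: the number of leaves adjacent to a strong support vertex. -/
noncomputable def numStrongLeaves (G : SimpleGraph V) : ℕ :=
  {x | isLeaf G x ∧ ∃ u, isStrongSupport G u ∧ G.Adj u x}.ncard

/-- a major vertex: a vertex of degree at least 3. -/
def isMajor (G : SimpleGraph V) (u : V) : Prop := 3 ≤ (G.neighborSet u).ncard

/-- `x` is a terminal vertex of the major vertex `u`: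
`x` is a leaf and `u` is the major vertex closest to `x`. -/
def isTerminalOf (G : SimpleGraph V) (u x : V) : Prop :=
  isLeaf G x ∧ isMajor G u ∧ ∀ w, isMajor G w → w ≠ u → G.dist u x < G.dist w x

/-- the terminal degree `ter(u)` of `u`. -/
noncomputable def terDeg (G : SimpleGraph V) (u : V) : ℕ :=
  {x | isTerminalOf G u x}.ncard

/-- `G` is (isomorphic to) a path graph. -/
def isPathGraph (G : SimpleGraph V) : Prop :=
  ∃ n : ℕ, Nonempty (G ≃g SimpleGraph.pathGraph n)


section Aux
set_option linter.unusedSectionVars false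
open Walk
variable {V : Type*} [Fintype V] {G : SimpleGraph V}


private lemma myNcardDeg [DecidableRel G.Adj] (v : V) :
    (G.neighborSet v).ncard = G.degree v := by
  rw [← card_neighborSet_eq_degree, Set.ncard_eq_toFinset_card', Set.toFinset_card]

private lemma myPathLen (ht : G.IsTree) {x y : V} {p : G.Walk x y} (hp : p.IsPath) :
    p.length = G.dist x y := by
  obtain ⟨q, hq, hql⟩ := ht.isConnected.exists_path_of_dist x y
  have : (⟨p, hp⟩ : G.Path x y) = ⟨q, hq⟩ := ht.IsAcyclic.path_unique _ _
  rw [← hql]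
  exact congrArg Walk.length (congrArg Subtype.val this)

private lemma myDistSplit (ht : G.IsTree) {x y v : V} {p : G.Walk x y} (hp : p.IsPath)
    (hv : v ∈ p.support) : G.dist x v + G.dist v y = G.dist x y := by
  classical
  have hs := p.take_spec hv
  have h1 : (p.takeUntil v hv).length = G.dist x v := myPathLen ht (hp.takeUntil hv)
  have h2 : (p.dropUntil v hv).length = G.dist v y := myPathLen ht (hp.dropUntil hv)
  have h3 : p.length = G.dist x y := myPathLen ht hp
  have := congrArg Walk.length hs
  rw [Walk.length_append, h1, h2, h3] at this
  exact this

private lemma myClosure {y : V} : ∀ {a : V} (p : G.Walk a y), p.IsPath → ∀ z : V,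
    G.neighborSet a ⊆ {v | v ∈ p.support} ∪ {z} →
    (∀ v ∈ p.support, v ≠ a → v ≠ y → (G.neighborSet v).ncard ≤ 2) →
    ∀ v ∈ p.support, v ≠ y → G.neighborSet v ⊆ {v | v ∈ p.support} ∪ {z} := by
  intro a p
  induction p with
  | nil =>
    intro _ _ _ _ v hv hvy
    simp only [Walk.support_nil, List.mem_singleton] at hv
    exact absurd hv hvy
  | @cons a b y h q ih =>
    intro hp z hz h2 v hv hvy
    rw [Walk.support_cons, List.mem_cons] at hv
    rcases hv with rfl | hvq
    · exact hz
    · have hq : q.IsPath := hp.of_cons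
      have hanq : a ∉ q.support := (Walk.cons_isPath_iff _ _).mp hp |>.2
      have hby : b ≠ y := by
        rintro rfl
        rw [Walk.isPath_iff_eq_nil.mp hq] at hvq
        simp only [Walk.support_nil, List.mem_singleton] at hvq
        exact hvy hvq
      cases q with
      | nil => exact absurd rfl hby
      | @cons b c y h' r =>
        have hc : c ∈ (Walk.cons h' r).support := by
          rw [Walk.support_cons]; exact List.mem_cons_of_mem _ (Walk.start_mem_support r)
        have hac : a ≠ c := fun hh => hanq (hh ▸ hc)
        have hsub : ({a, c} : Set V) ⊆ G.neighborSet b := by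
          rintro w (rfl | rfl)
          · exact h.symm
          · exact h'
        have hble : (G.neighborSet b).ncard ≤ 2 := by
          refine h2 b ?_ h.ne' hby
          rw [Walk.support_cons]; exact List.mem_cons_of_mem _ (Walk.start_mem_support _)
        have hNb : ({a, c} : Set V) = G.neighborSet b := by
          apply Set.eq_of_subset_of_ncard_le hsub _ (Set.toFinite _)
          rw [Set.ncard_pair hac]; exact hble
        have hzb : G.neighborSet b ⊆ {v | v ∈ (Walk.cons h' r).support} ∪ {a} := by
          rw [← hNb]
          rintro w (rfl | rfl)
          · exact Or.inr rfl
          · exact Or.inl hc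
        have h2' : ∀ v ∈ (Walk.cons h' r).support, v ≠ b → v ≠ y →
            (G.neighborSet v).ncard ≤ 2 := by
          intro v hv hvb hvy
          refine h2 v ?_ (fun hh => hanq (hh ▸ hv)) hvy
          rw [Walk.support_cons]; exact List.mem_cons_of_mem _ hv
        have := ih hq a hzb h2' v hvq hvy
        refine this.trans ?_
        rintro w (hw | rfl)
        · exact Or.inl (by rw [Walk.support_cons]; exact List.mem_cons_of_mem _ hw)
        · exact Or.inl (by rw [Walk.support_cons]; exact List.mem_cons_self)

private lemma myReach {x y : V} {p : G.Walk x y}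
    (H : ∀ v ∈ p.support, v ≠ y → G.neighborSet v ⊆ {u | u ∈ p.support})
    {w : V} (hw : w ∉ p.support) :
    ∀ (v : V) (r : G.Walk v w), v ∈ p.support → y ∈ r.support := by
  intro v r
  induction r with
  | nil => intro hv; exact absurd hv hw
  | @cons v b w h q ih =>
    intro hv
    by_cases hvy : v = y
    · rw [Walk.support_cons]; exact hvy ▸ List.mem_cons_self (a := v)
    · have hb : b ∈ p.support := H v hv hvy h
      rw [Walk.support_cons]
      exact List.mem_cons_of_mem _ (ih hw hb)

private lemma myDistAdd (ht : G.IsTree) {x y : V} {p : G.Walk x y} (hp : p.IsPath)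
    (H : ∀ v ∈ p.support, v ≠ y → G.neighborSet v ⊆ {u | u ∈ p.support})
    {w : V} (hw : w ∉ p.support) : G.dist x w = p.length + G.dist y w := by
  classical
  obtain ⟨r, hrl⟩ := ht.isConnected.exists_walk_length_eq_dist x w
  have hy : y ∈ r.support := myReach H hw x r p.start_mem_support
  have hsplit := congrArg Walk.length (r.take_spec hy)
  rw [Walk.length_append] at hsplit
  have h1 : G.dist x y ≤ (r.takeUntil y hy).length := dist_le _
  have h2 : G.dist y w ≤ (r.dropUntil y hy).length := dist_le _
  have h3 : G.dist x w ≤ G.dist x y + G.dist y w := ht.isConnected.dist_triangle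
  have h4 : p.length = G.dist x y := myPathLen ht hp
  omega

private lemma myInternal {y : V} : ∀ {x : V} (p : G.Walk x y), p.IsPath →
    ∀ v ∈ p.support, v ≠ x → v ≠ y → 2 ≤ (G.neighborSet v).ncard := by
  intro x p
  induction p with
  | nil =>
    intro _ v hv hvx _
    simp only [Walk.support_nil, List.mem_singleton] at hv
    exact absurd hv hvx
  | @cons x b y h q ih =>
    intro hp v hv hvx hvy
    rw [Walk.support_cons, List.mem_cons] at hv
    rcases hv with rfl | hvq
    · exact absurd rfl hvx
    · have hq : q.IsPath := hp.of_cons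
      have hxnq : x ∉ q.support := (Walk.cons_isPath_iff _ _).mp hp |>.2
      by_cases hvb : v = b
      · subst hvb
        have hby : v ≠ y := hvy
        cases q with
        | nil => exact absurd rfl hvy
        | @cons b c y h' r =>
          have hc : c ∈ (Walk.cons h' r).support := by
            rw [Walk.support_cons]; exact List.mem_cons_of_mem _ (Walk.start_mem_support r)
          have hxc : x ≠ c := fun hh => hxnq (hh ▸ hc)
          have hsub : ({x, c} : Set V) ⊆ G.neighborSet v := by
            rintro w (rfl | rfl)
            · exact h.symm
            · exact h'
          calc 2 = ({x, c} : Set V).ncard := (Set.ncard_pair hxc).symm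
            _ ≤ _ := Set.ncard_le_ncard hsub (Set.toFinite _)
      · exact ih hq v hvq hvb hvy

private lemma myLeafClosed {x y : V} (hx : isLeaf G x) {p : G.Walk x y} (hp : p.IsPath)
    (hint : ∀ v ∈ p.support, v ≠ x → v ≠ y → ¬ isMajor G v) :
    ∀ v ∈ p.support, v ≠ y → G.neighborSet v ⊆ {u | u ∈ p.support} := by
  have h2 : ∀ v ∈ p.support, v ≠ x → v ≠ y → (G.neighborSet v).ncard ≤ 2 := by
    intro v hv hvx hvy
    have := hint v hv hvx hvy
    unfold isMajor at this
    omega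
  cases p with
  | nil =>
    intro v hv hvy
    simp only [Walk.support_nil, List.mem_singleton] at hv
    exact absurd hv hvy
  | @cons x b y h q =>
    have hb : b ∈ (Walk.cons h q).support := by
      rw [Walk.support_cons]; exact List.mem_cons_of_mem _ (Walk.start_mem_support q)
    have hNx : G.neighborSet x = {b} := by
      obtain ⟨c, hc⟩ := Set.ncard_eq_one.mp hx
      have : b ∈ G.neighborSet x := h
      rw [hc] at this ⊢
      rw [Set.mem_singleton_iff] at this
      rw [this]
    have hz : G.neighborSet x ⊆ {v | v ∈ (Walk.cons h q).support} ∪ {x} := by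
      rw [hNx]
      rintro w rfl
      exact Or.inl hb
    intro v hv hvy
    have := myClosure (Walk.cons h q) hp x hz h2 v hv hvy
    refine this.trans ?_
    rintro w (hw | rfl)
    · exact hw
    · exact (Walk.cons h q).start_mem_support

private lemma myLeafNotMajor {x : V} (h : isLeaf G x) : ¬ isMajor G x := by
  unfold isLeaf at h; unfold isMajor; omega

private lemma myDegPos (ht : G.IsTree) (hcard : 2 ≤ Fintype.card V) (v : V) :
    1 ≤ (G.neighborSet v).ncard := by
  obtain ⟨u, hu⟩ := Fintype.exists_ne_of_one_lt_card (by omega) v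
  obtain ⟨w⟩ := ht.isConnected v u
  cases w with
  | nil => exact absurd rfl hu
  | cons h q =>
    have : 0 < (G.neighborSet v).ncard := (Set.ncard_pos (Set.toFinite _)).mpr ⟨_, h⟩
    omega

private lemma myExLeaf (ht : G.IsTree) (hcard : 2 ≤ Fintype.card V) : ∃ x, isLeaf G x := by
  classical
  by_contra hno
  push_neg at hno
  have hdeg : ∀ v, 2 ≤ G.degree v := by
    intro v
    have h1 := myDegPos ht hcard v
    have h2 : (G.neighborSet v).ncard ≠ 1 := hno v
    rw [myNcardDeg] at h1 h2
    omega
  have hsum := G.sum_degrees_eq_twice_card_edges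
  have hedge := ht.card_edgeFinset
  have hge : 2 * Fintype.card V ≤ ∑ v, G.degree v := by
    calc 2 * Fintype.card V = ∑ _v : V, 2 := by
          rw [Finset.sum_const, Finset.card_univ]; ring
      _ ≤ _ := Finset.sum_le_sum fun v _ => hdeg v
  omega

private lemma myPathGraph (ht : G.IsTree) (hcard : 2 ≤ Fintype.card V)
    (hnm : ∀ v, ¬ isMajor G v) : isPathGraph G := by
  classical
  obtain ⟨x, hx⟩ := myExLeaf ht hcard
  have hconn := ht.isConnected
  have hinj : Function.Injective (fun v => G.dist x v) := by
    intro u v huv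
    simp only at huv
    obtain ⟨p, hp, hpl⟩ := hconn.exists_path_of_dist x v
    have H := myLeafClosed hx hp (fun w _ _ _ => hnm w)
    by_cases hu : u ∈ p.support
    · have := myDistSplit ht hp hu
      have h0 : G.dist u v = 0 := by omega
      exact hconn.dist_eq_zero_iff.mp h0
    · have := myDistAdd ht hp H hu
      have h0 : G.dist v u = 0 := by omega
      exact (hconn.dist_eq_zero_iff.mp h0).symm
  have hlt : ∀ v, G.dist x v < Fintype.card V := by
    intro v
    obtain ⟨p, hp, hpl⟩ := hconn.exists_path_of_dist x v
    rw [← hpl]; exact hp.length_lt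
  have hgap : ∀ v, G.dist x v ≠ 0 → ∃ u, G.Adj u v ∧ G.dist x u + 1 = G.dist x v := by
    intro v h0
    obtain ⟨r, hrl⟩ := hconn.exists_walk_length_eq_dist v x
    cases r with
    | nil => rw [SimpleGraph.dist_comm] at h0; exact absurd (SimpleGraph.dist_self (G := G)) h0
    | @cons v b x h q =>
      refine ⟨b, h.symm, ?_⟩
      rw [Walk.length_cons] at hrl
      have h1 : G.dist x b ≤ q.length := by
        rw [SimpleGraph.dist_comm]; exact dist_le q
      have h2 : G.dist x v ≤ G.dist x b + G.dist b v := hconn.dist_triangle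
      have h3 : G.dist b v = 1 := dist_eq_one_iff_adj.mpr h.symm
      have h4 : G.dist x v = q.length + 1 := by rw [SimpleGraph.dist_comm]; omega
      omega
  have hbij : Function.Bijective (fun v => (⟨G.dist x v, hlt v⟩ : Fin (Fintype.card V))) := by
    rw [Fintype.bijective_iff_injective_and_card]
    constructor
    · intro u v huv
      apply hinj
      simpa using congrArg Fin.val huv
    · simp
  refine ⟨Fintype.card V, ⟨⟨Equiv.ofBijective _ hbij, ?_⟩⟩⟩
  intro a b
  show (pathGraph (Fintype.card V)).Adj ⟨G.dist x a, _⟩ ⟨G.dist x b, _⟩ ↔ G.Adj a b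
  rw [pathGraph_adj]
  simp only
  constructor
  · rintro (hab | hba)
    · obtain ⟨u, hu, hu1⟩ := hgap b (by omega)
      have heq : u = a := hinj (by simp only; omega)
      exact heq ▸ hu
    · obtain ⟨u, hu, hu1⟩ := hgap a (by omega)
      have heq : u = b := hinj (by simp only; omega)
      exact (heq ▸ hu).symm
  · intro hadj
    have h1 : G.dist x a ≤ G.dist x b + G.dist b a := hconn.dist_triangle
    have h2 : G.dist x b ≤ G.dist x a + G.dist a b := hconn.dist_triangle
    have h3 : G.dist b a = 1 := dist_eq_one_iff_adj.mpr hadj.symm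
    have h4 : G.dist a b = 1 := dist_eq_one_iff_adj.mpr hadj
    have h5 : G.dist x a ≠ G.dist x b := fun hh => G.ne_of_adj hadj (hinj hh)
    omega

private lemma myTerminal (ht : G.IsTree) {x m : V} (hx : isLeaf G x) (hm : isMajor G m)
    {p : G.Walk x m} (hp : p.IsPath)
    (hint : ∀ v ∈ p.support, v ≠ m → ¬ isMajor G v) :
    isTerminalOf G m x := by
  refine ⟨hx, hm, ?_⟩
  intro w hw hwm
  have hwp : w ∉ p.support := fun hmem => hint w hmem hwm hw
  have H := myLeafClosed hx hp (fun v hv _ hvm => hint v hv hvm)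
  have hda := myDistAdd ht hp H hwp
  have hlen : p.length = G.dist x m := myPathLen ht hp
  have hpos : 0 < G.dist m w := ht.isConnected.pos_dist_of_ne (Ne.symm hwm)
  rw [show G.dist m x = G.dist x m from SimpleGraph.dist_comm,
    show G.dist w x = G.dist x w from SimpleGraph.dist_comm]
  omega

end Aux

theorem stmt4 {V : Type*} [Fintype V] (G : SimpleGraph V)
    (htree : G.IsTree) (hcard : 2 ≤ Fintype.card V) (hnp : ¬ isPathGraph G) :
    (∀ u : V, isMajor G u → 2 ≤ terDeg G u →
        ∀ x : V, isTerminalOf G u x → G.Adj u x) ↔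
      (∀ x y : V, isLeaf G x → isLeaf G y → 2 < G.dist x y →
        ∀ p : G.Walk x y, p.IsPath →
          ∃ u v : V, u ≠ v ∧ isMajor G u ∧ isMajor G v ∧
            u ∈ p.support ∧ v ∈ p.support) := by
  classical
  have hconn := htree.isConnected
  constructor
  · intro hL x y hx hy hd p hp
    have hplen : p.length = G.dist x y := myPathLen htree hp
    have hxy : x ≠ y := by
      intro h; subst h; rw [SimpleGraph.dist_self] at hd; omega
    by_contra hno
    push_neg at hno
    have huniq : ∀ a ∈ p.support, ∀ b ∈ p.support, isMajor G a → isMajor G b → a = b := by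
      intro a ha b hb hma hmb
      by_contra hne
      exact hno a b hne hma hmb ha hb
    have hmaj : ∃ m ∈ p.support, isMajor G m := by
      by_contra hnom
      push_neg at hnom
      obtain ⟨m, hm⟩ : ∃ m, isMajor G m := by
        by_contra hh
        push_neg at hh
        exact hnp (myPathGraph htree hcard hh)
      have hmp : m ∉ p.support := fun hh => hnom m hh hm
      have hmp' : m ∉ p.reverse.support := by
        rwa [Walk.support_reverse, List.mem_reverse]
      have H1 := myLeafClosed hx hp (fun v hv _ _ => hnom v hv)
      have H2 := myLeafClosed hy hp.reverse (fun v hv _ _ =>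
        hnom v (by rwa [Walk.support_reverse, List.mem_reverse] at hv))
      obtain ⟨r, hr, hrl⟩ := hconn.exists_path_of_dist x m
      have hyr : y ∈ r.support := myReach H1 hmp x r p.start_mem_support
      have hy' : y ∈ p.reverse.support := by
        rw [Walk.support_reverse, List.mem_reverse]; exact p.end_mem_support
      have hxs : x ∈ (r.dropUntil y hyr).support :=
        myReach H2 hmp' y (r.dropUntil y hyr) hy'
      have hnodup := hr.support_nodup
      rw [← r.take_spec hyr, Walk.support_append] at hnodup
      have hxt : x ∈ (r.takeUntil y hyr).support := Walk.start_mem_support _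
      have hxtail : x ∈ (r.dropUntil y hyr).support.tail := by
        rw [Walk.support_eq_cons] at hxs
        rcases List.mem_cons.mp hxs with h | h
        · exact absurd h hxy
        · exact h
      exact (List.disjoint_of_nodup_append hnodup) hxt hxtail
    obtain ⟨m, hmp, hm⟩ := hmaj
    have hint1 : ∀ v ∈ (p.takeUntil m hmp).support, v ≠ m → ¬ isMajor G v :=
      fun v hv hvm hmv =>
        hvm (huniq v (p.support_takeUntil_subset hmp hv) m hmp hmv hm)
    have htx : isTerminalOf G m x := myTerminal htree hx hm (hp.takeUntil hmp) hint1
    have hint2 : ∀ v ∈ (p.dropUntil m hmp).reverse.support, v ≠ m → ¬ isMajor G v := by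
      intro v hv hvm hmv
      rw [Walk.support_reverse, List.mem_reverse] at hv
      exact hvm (huniq v (p.support_dropUntil_subset hmp hv) m hmp hmv hm)
    have hty : isTerminalOf G m y :=
      myTerminal htree hy hm (hp.dropUntil hmp).reverse hint2
    have hter : 2 ≤ terDeg G m := by
      have hsub : ({x, y} : Set V) ⊆ {z | isTerminalOf G m z} := by
        rintro w (rfl | rfl)
        · exact htx
        · exact hty
      calc 2 = ({x, y} : Set V).ncard := (Set.ncard_pair hxy).symm
        _ ≤ _ := Set.ncard_le_ncard hsub (Set.toFinite _)
    have hax := hL m hm hter x htx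
    have hay := hL m hm hter y hty
    have h1 : G.dist x m = 1 := dist_eq_one_iff_adj.mpr hax.symm
    have h2 : G.dist m y = 1 := dist_eq_one_iff_adj.mpr hay
    have h3 : G.dist x y ≤ G.dist x m + G.dist m y := hconn.dist_triangle
    omega
  · intro hR u hm hter x htx
    by_contra hadj
    obtain ⟨y, hty, hyx⟩ := Set.exists_ne_of_one_lt_ncard
      (s := {z | isTerminalOf G u z}) (by unfold terDeg at hter; omega) x
    have hty : isTerminalOf G u y := hty
    have hy : isLeaf G y := hty.1
    have hx : isLeaf G x := htx.1
    have hxu : x ≠ u := fun h => myLeafNotMajor hx (h ▸ hm)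
    have hyu : y ≠ u := fun h => myLeafNotMajor hy (h ▸ hm)
    obtain ⟨p, hp, hpl⟩ := hconn.exists_path_of_dist x u
    have hint : ∀ v ∈ p.support, v ≠ u → ¬ isMajor G v := by
      intro v hv hvu hmv
      have h1 := htx.2.2 v hmv hvu
      have h2 := myDistSplit htree hp hv
      have h3 : 0 < G.dist v u := hconn.pos_dist_of_ne hvu
      rw [show G.dist u x = G.dist x u from SimpleGraph.dist_comm,
        show G.dist v x = G.dist x v from SimpleGraph.dist_comm] at h1
      omega
    have hyp : y ∉ p.support := by
      intro hyps
      have := myInternal p hp y hyps hyx hyu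
      unfold isLeaf at hy
      omega
    have H := myLeafClosed hx hp (fun v hv _ hvu => hint v hv hvu)
    have hda := myDistAdd htree hp H hyp
    have hxu2 : 2 ≤ G.dist x u := by
      have h1 : G.dist x u ≠ 1 := fun h => hadj (dist_eq_one_iff_adj.mp h).symm
      have h0 : 0 < G.dist x u := hconn.pos_dist_of_ne hxu
      omega
    have huy : 0 < G.dist u y := hconn.pos_dist_of_ne (Ne.symm hyu)
    have hdxy : 2 < G.dist x y := by omega
    obtain ⟨q, hq, hql⟩ := hconn.exists_path_of_dist x y
    obtain ⟨a, b, hab, hma, hmb, has, hbs⟩ := hR x y hx hy hdxy q hq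
    obtain ⟨w, hws, hmw, hwu⟩ : ∃ w ∈ q.support, isMajor G w ∧ w ≠ u := by
      by_cases hau : a = u
      · exact ⟨b, hbs, hmb, fun h => hab (hau.trans h.symm)⟩
      · exact ⟨a, has, hma, hau⟩
    have hsp := myDistSplit htree hq hws
    have e1 := htx.2.2 w hmw hwu
    have e2 := hty.2.2 w hmw hwu
    rw [show G.dist u x = G.dist x u from SimpleGraph.dist_comm,
      show G.dist w x = G.dist x w from SimpleGraph.dist_comm] at e1
    omega
end

section
/- For the path P_n on n ≥ 2 vertices, γ_M(P_n) = dim(P_n) + γ(P_n) if and only if n = 3. -/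
open SimpleGraph

variable {V : Type*}

private lemma pg_walk_le {n : ℕ} {i j : Fin n} (w : (SimpleGraph.pathGraph n).Walk i j) :
    Nat.dist i.val j.val ≤ w.length := by
  induction w with
  | nil => simp [Nat.dist_self]
  | @cons a b c h p ih =>
    rw [pathGraph_adj] at h
    simp only [SimpleGraph.Walk.length_cons]
    simp only [Nat.dist] at ih ⊢
    omega

private lemma pg_walk_exists {n : ℕ} : ∀ (k : ℕ) (i j : Fin n), i.val + k = j.val →
    ∃ w : (SimpleGraph.pathGraph n).Walk i j, w.length = k := by
  intro k
  induction k with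
  | zero =>
    intro i j h
    have : i = j := Fin.ext (by omega)
    subst this
    exact ⟨.nil, rfl⟩
  | succ k ih =>
    intro i j h
    have hlt : i.val + 1 < n := by have := j.isLt; omega
    have hadj : (SimpleGraph.pathGraph n).Adj i ⟨i.val + 1, hlt⟩ :=
      pathGraph_adj.mpr (Or.inl rfl)
    obtain ⟨w, hw⟩ := ih ⟨i.val + 1, hlt⟩ j (by simp; omega)
    exact ⟨.cons hadj w, by simp [hw]⟩

private lemma pg_dist {n : ℕ} (i j : Fin n) :
    (SimpleGraph.pathGraph n).dist i j = Nat.dist i.val j.val := by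
  apply le_antisymm
  · rcases le_total i.val j.val with h | h
    · obtain ⟨w, hw⟩ := pg_walk_exists (j.val - i.val) i j (by omega)
      have h2 := SimpleGraph.dist_le w
      rw [hw] at h2
      simp only [Nat.dist]; omega
    · obtain ⟨w, hw⟩ := pg_walk_exists (i.val - j.val) j i (by omega)
      have h2 := SimpleGraph.dist_le w
      rw [hw, ← SimpleGraph.dist_comm] at h2
      simp only [Nat.dist]; omega
  · obtain ⟨w, hw⟩ := ((pathGraph_preconnected n) i j).exists_walk_length_eq_dist
    have := pg_walk_le w
    omega

private lemma zero_resolving {n : ℕ} (hn : 0 < n) :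
    isResolvingSet (SimpleGraph.pathGraph n) {(⟨0, hn⟩ : Fin n)} := by
  intro x y hxy
  refine ⟨⟨0, hn⟩, rfl, ?_⟩
  rw [pg_dist, pg_dist]
  have hne : x.val ≠ y.val := fun h => hxy (Fin.ext h)
  simp only [Nat.dist]
  omega

private lemma two_resolving {n : ℕ} {S : Set (Fin n)} (hS : 2 ≤ S.ncard) :
    isResolvingSet (SimpleGraph.pathGraph n) S := by
  obtain ⟨u, v, hu, hv, huv⟩ := (Set.one_lt_ncard_iff S.toFinite).mp hS
  intro x y hxy
  by_contra hc
  push_neg at hc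
  have h1 := hc u hu
  have h2 := hc v hv
  rw [pg_dist, pg_dist] at h1 h2
  have hne : x.val ≠ y.val := fun h => hxy (Fin.ext h)
  have : u.val = v.val := by simp only [Nat.dist] at h1 h2; omega
  exact huv (Fin.ext this)

private lemma empty_not_resolving {n : ℕ} (hn : 2 ≤ n) :
    ¬ isResolvingSet (SimpleGraph.pathGraph n) ∅ := by
  intro h
  obtain ⟨u, hu, -⟩ := h ⟨0, by omega⟩ ⟨1, by omega⟩ (Fin.ne_of_val_ne (by simp))
  exact hu

private lemma empty_not_dom {n : ℕ} (hn : 0 < n) :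
    ¬ isDominatingSet (SimpleGraph.pathGraph n) ∅ := by
  intro h
  obtain ⟨u, hu, -⟩ := h ⟨0, hn⟩ (Set.notMem_empty _)
  exact hu

private lemma metricDim_pg {n : ℕ} (hn : 2 ≤ n) :
    metricDim (SimpleGraph.pathGraph n) = 1 := by
  have h1 : 1 ∈ {m | ∃ S : Set (Fin n), isResolvingSet (SimpleGraph.pathGraph n) S ∧
      S.ncard = m} :=
    ⟨{⟨0, by omega⟩}, zero_resolving (by omega), Set.ncard_singleton _⟩
  refine le_antisymm (Nat.sInf_le h1) ?_
  rw [Nat.one_le_iff_ne_zero]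
  intro h0
  unfold metricDim at h0
  rw [Nat.sInf_eq_zero] at h0
  rcases h0 with h0 | h0
  · obtain ⟨S, hres, hcard⟩ := h0
    rw [Set.ncard_eq_zero S.toFinite] at hcard
    subst hcard
    exact empty_not_resolving hn hres
  · rw [h0] at h1
    exact h1

private lemma dom_near {n : ℕ} {S : Set (Fin n)}
    (hS : isDominatingSet (SimpleGraph.pathGraph n) S) (x : Fin n) :
    ∃ u ∈ S, u.val ≤ x.val + 1 ∧ x.val ≤ u.val + 1 := by
  by_cases hx : x ∈ S
  · exact ⟨x, hx, by omega, by omega⟩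
  · obtain ⟨u, hu, hadj⟩ := hS x hx
    rw [pathGraph_adj] at hadj
    exact ⟨u, hu, by omega, by omega⟩

private lemma dom_two {n : ℕ} (hn : 4 ≤ n) {S : Set (Fin n)}
    (hS : isDominatingSet (SimpleGraph.pathGraph n) S) : 2 ≤ S.ncard := by
  obtain ⟨u, hu, hu1, hu2⟩ := dom_near hS ⟨0, by omega⟩
  obtain ⟨v, hv, hv1, hv2⟩ := dom_near hS ⟨3, by omega⟩
  simp only [Fin.val_mk] at hu1 hu2 hv1 hv2
  have huv : u ≠ v := by
    intro h
    rw [h] at hu1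
    omega
  exact (Set.one_lt_ncard_iff S.toFinite).mpr ⟨u, v, hu, hv, huv⟩

private lemma univ_mld {n : ℕ} (hn : 0 < n) :
    isMLDSet (SimpleGraph.pathGraph n) Set.univ := by
  constructor
  · intro x y hxy
    refine ⟨x, Set.mem_univ x, ?_⟩
    rw [pg_dist, pg_dist]
    have hne : x.val ≠ y.val := fun h => hxy (Fin.ext h)
    simp only [Nat.dist]
    omega
  · intro x hx
    exact absurd (Set.mem_univ x) hx

private lemma sInf_eq_of_mem {A : Set ℕ} {k : ℕ} (hk : k ∈ A)
    (h : ∀ m ∈ A, k ≤ m) : sInf A = k :=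
  le_antisymm (Nat.sInf_le hk) (h _ (Nat.sInf_mem ⟨k, hk⟩))

theorem stmt6 (n : ℕ) (hn : 2 ≤ n) :
    mldNum (SimpleGraph.pathGraph n) =
        metricDim (SimpleGraph.pathGraph n) + domNum (SimpleGraph.pathGraph n) ↔
      n = 3 := by
  have hdim := metricDim_pg hn
  by_cases h4 : 4 ≤ n
  · -- For n ≥ 4 : mldNum = domNum, so equality fails
    have hne : {m | ∃ S : Set (Fin n), isMLDSet (SimpleGraph.pathGraph n) S ∧
        S.ncard = m}.Nonempty :=
      ⟨(Set.univ : Set (Fin n)).ncard, Set.univ, univ_mld (by omega), rfl⟩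
    have hdne : {m | ∃ S : Set (Fin n), isDominatingSet (SimpleGraph.pathGraph n) S ∧
        S.ncard = m}.Nonempty :=
      ⟨(Set.univ : Set (Fin n)).ncard, Set.univ, (univ_mld (by omega)).2, rfl⟩
    have heq : mldNum (SimpleGraph.pathGraph n) = domNum (SimpleGraph.pathGraph n) := by
      apply le_antisymm
      · -- min dominating set has ≥ 2 elements, hence resolving, hence MLD
        obtain ⟨S, hdom, hcard⟩ := Nat.sInf_mem hdne
        exact Nat.sInf_le ⟨S, ⟨two_resolving (dom_two h4 hdom), hdom⟩, hcard⟩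
      · obtain ⟨S, hmld, hcard⟩ := Nat.sInf_mem hne
        exact Nat.sInf_le ⟨S, hmld.2, hcard⟩
    rw [heq, hdim]
    omega
  · interval_cases n
    · -- n = 2
      have hm : mldNum (SimpleGraph.pathGraph 2) = 1 := by
        apply sInf_eq_of_mem
        · refine ⟨{⟨0, by omega⟩}, ⟨zero_resolving (by omega), ?_⟩, Set.ncard_singleton _⟩
          intro x hx
          refine ⟨⟨0, by omega⟩, rfl, pathGraph_adj.mpr (Or.inl ?_)⟩
          have : x.val ≠ 0 := fun h => hx (by exact Set.mem_singleton_iff.mpr (Fin.ext h))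
          have := x.isLt
          simp only [Fin.val_mk]
          omega
        · intro m hm
          rcases Nat.eq_zero_or_pos m with rfl | h
          · obtain ⟨S, ⟨hres, -⟩, hcard⟩ := hm
            rw [Set.ncard_eq_zero S.toFinite] at hcard
            subst hcard
            exact absurd hres (empty_not_resolving (by omega))
          · exact h
      have hd : domNum (SimpleGraph.pathGraph 2) = 1 := by
        apply sInf_eq_of_mem
        · refine ⟨{⟨0, by omega⟩}, ?_, Set.ncard_singleton _⟩
          intro x hx
          refine ⟨⟨0, by omega⟩, rfl, pathGraph_adj.mpr (Or.inl ?_)⟩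
          have : x.val ≠ 0 := fun h => hx (by exact Set.mem_singleton_iff.mpr (Fin.ext h))
          have := x.isLt
          simp only [Fin.val_mk]
          omega
        · intro m hm
          rcases Nat.eq_zero_or_pos m with rfl | h
          · obtain ⟨S, hdom, hcard⟩ := hm
            rw [Set.ncard_eq_zero S.toFinite] at hcard
            subst hcard
            exact absurd hdom (empty_not_dom (by omega))
          · exact h
      rw [hm, hd, hdim]
      omega
    · -- n = 3
      have hd : domNum (SimpleGraph.pathGraph 3) = 1 := by
        apply sInf_eq_of_mem
        · refine ⟨{⟨1, by omega⟩}, ?_, Set.ncard_singleton _⟩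
          intro x hx
          refine ⟨⟨1, by omega⟩, rfl, pathGraph_adj.mpr ?_⟩
          have : x.val ≠ 1 := fun h => hx (by exact Set.mem_singleton_iff.mpr (Fin.ext h))
          have := x.isLt
          simp only [Fin.val_mk]
          omega
        · intro m hm
          rcases Nat.eq_zero_or_pos m with rfl | h
          · obtain ⟨S, hdom, hcard⟩ := hm
            rw [Set.ncard_eq_zero S.toFinite] at hcard
            subst hcard
            exact absurd hdom (empty_not_dom (by omega))
          · exact h
      have hm : mldNum (SimpleGraph.pathGraph 3) = 2 := by
        apply sInf_eq_of_mem
        · refine ⟨{⟨0, by omega⟩, ⟨1, by omega⟩}, ⟨?_, ?_⟩, ?_⟩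
          · exact two_resolving (le_of_eq (Set.ncard_pair (by
              exact Fin.ne_of_val_ne (by simp))).symm)
          · intro x hx
            simp only [Set.mem_insert_iff, Set.mem_singleton_iff, not_or] at hx
            refine ⟨⟨1, by omega⟩, Set.mem_insert_of_mem _ rfl, pathGraph_adj.mpr ?_⟩
            have h0 : x.val ≠ 0 := fun h => hx.1 (Fin.ext h)
            have h1 : x.val ≠ 1 := fun h => hx.2 (Fin.ext h)
            have := x.isLt
            simp only [Fin.val_mk]
            omega
          · exact Set.ncard_pair (Fin.ne_of_val_ne (by simp))
        · intro m hm
          by_contra hlt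
          push_neg at hlt
          interval_cases m
          · obtain ⟨S, ⟨hres, -⟩, hcard⟩ := hm
            rw [Set.ncard_eq_zero S.toFinite] at hcard
            subst hcard
            exact absurd hres (empty_not_resolving (by omega))
          · obtain ⟨S, ⟨hres, hdom⟩, hcard⟩ := hm
            obtain ⟨u, rfl⟩ := Set.ncard_eq_one.mp hcard
            have hu := u.isLt
            rcases (by omega : u.val = 0 ∨ u.val = 1 ∨ u.val = 2) with h | h | h
            · -- u.val = 0
              have h2 : (⟨2, by omega⟩ : Fin 3) ∉ ({u} : Set (Fin 3)) := by
                simp only [Set.mem_singleton_iff]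
                exact fun he => by rw [← he] at h; simp at h
              obtain ⟨w, hw, hadj⟩ := hdom _ h2
              rw [Set.mem_singleton_iff] at hw
              subst hw
              rw [pathGraph_adj] at hadj
              simp only [Fin.val_mk] at hadj
              omega
            · -- u.val = 1 : pair (0,2) not resolved
              obtain ⟨w, hw, hne2⟩ := hres ⟨0, by omega⟩ ⟨2, by omega⟩
                (Fin.ne_of_val_ne (by simp))
              rw [Set.mem_singleton_iff] at hw
              subst hw
              rw [pg_dist, pg_dist] at hne2
              simp only [Nat.dist, Fin.val_mk] at hne2
              omega
            · -- u.val = 2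
              have h2 : (⟨0, by omega⟩ : Fin 3) ∉ ({u} : Set (Fin 3)) := by
                simp only [Set.mem_singleton_iff]
                exact fun he => by rw [← he] at h; simp at h
              obtain ⟨w, hw, hadj⟩ := hdom _ h2
              rw [Set.mem_singleton_iff] at hw
              subst hw
              rw [pathGraph_adj] at hadj
              simp only [Fin.val_mk] at hadj
              omega
      rw [hm, hd, hdim]
      omega
end

section
/- Let T be a finite tree of order at least 2 different from the path P_2. Then γ_M(T) = ℓ(T) if and only if for every vertex u of T there exists a leaf at distance at most 2 from u. -/
open SimpleGraph

variable {V : Type*}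

section MLDAux
variable {G : SimpleGraph V}



/-- split lemma -/
lemma dist_add_of_mem_geodesic (hc : G.Connected) {u y m : V} (p : G.Walk u y)
    (hlen : p.length = G.dist u y) (hm : m ∈ p.support) :
    G.dist u m + G.dist m y = G.dist u y := by
  obtain ⟨q, r, rfl⟩ := SimpleGraph.Walk.mem_support_iff_exists_append.mp hm
  have h1 : G.dist u m ≤ q.length := dist_le q
  have h2 : G.dist m y ≤ r.length := dist_le r
  have h3 := hc.dist_triangle (u := u) (v := m) (w := y)
  rw [SimpleGraph.Walk.length_append] at hlen
  omega

lemma exists_geodesic_through (hc : G.Connected) {u y m : V}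
    (h : G.dist u m + G.dist m y = G.dist u y) :
    ∃ p : G.Walk u y, p.length = G.dist u y ∧ m ∈ p.support := by
  obtain ⟨q, hq⟩ := (hc.preconnected u m).exists_walk_length_eq_dist
  obtain ⟨r, hr⟩ := (hc.preconnected m y).exists_walk_length_eq_dist
  refine ⟨q.append r, ?_, ?_⟩
  · rw [SimpleGraph.Walk.length_append]; omega
  · simp [SimpleGraph.Walk.mem_support_append_iff]

lemma reachable_deleteEdges_or {a b t : V} (p : G.Walk t a) :
    (G.deleteEdges {s(a,b)}).Reachable t a ∨ (G.deleteEdges {s(a,b)}).Reachable t b := by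
  induction p with
  | nil => exact Or.inl (Reachable.refl _)
  | @cons t t' a h q ih =>
    by_cases he : s(t, t') = s(a, b)
    · rw [Sym2.eq_iff] at he
      rcases he with ⟨rfl, rfl⟩ | ⟨rfl, rfl⟩
      · exact Or.inl (Reachable.refl _)
      · exact Or.inr (Reachable.refl _)
    · have hadj : (G.deleteEdges {s(a,b)}).Adj t t' := by
        rw [deleteEdges_adj]; exact ⟨h, by simpa using he⟩
      rcases ih with h' | h'
      · exact Or.inl (hadj.reachable.trans h')
      · exact Or.inr (hadj.reachable.trans h')


/-- crossing a bridge: if `t` is on the `a`-side and `x` on the `b`-side of the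
bridge `ab`, then geodesics from `t` to `x` pass through `a` and `b`. -/
lemma dist_cross_bridge (ht : G.IsTree) {a b t x : V} (hadj : G.Adj a b)
    (hta : (G.deleteEdges {s(a,b)}).Reachable t a)
    (hbx : (G.deleteEdges {s(a,b)}).Reachable b x) :
    G.dist t a + G.dist a x = G.dist t x ∧ G.dist t b + G.dist b x = G.dist t x := by
  have hc := ht.isConnected
  have hbridge : G.IsBridge s(a, b) :=
    (isAcyclic_iff_forall_adj_isBridge.mp ht.IsAcyclic) hadj
  have hnr : ¬ (G.deleteEdges {s(a,b)}).Reachable a b := isBridge_iff.mp hbridge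
  obtain ⟨p, hp⟩ := (hc.preconnected t x).exists_walk_length_eq_dist
  have hep : s(a, b) ∈ p.edges := by
    by_contra hep
    exact hnr (hta.symm.trans ((p.toDeleteEdges {s(a,b)} (by intro e he; simp only [Set.mem_singleton_iff]; rintro rfl; exact hep he)).reachable.trans hbx.symm))
  have ha : a ∈ p.support := p.fst_mem_support_of_mem_edges hep
  have hb : b ∈ p.support := p.snd_mem_support_of_mem_edges hep
  exact ⟨dist_add_of_mem_geodesic hc p hp ha, dist_add_of_mem_geodesic hc p hp hb⟩


/-- neighbor dichotomy in a tree -/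
lemma dist_nbr (ht : G.IsTree) {a b : V} (hadj : G.Adj a b) (t : V) :
    G.dist t b = G.dist t a + 1 ∨ G.dist t a = G.dist t b + 1 := by
  have hc := ht.isConnected
  have hab : G.dist a b = 1 := dist_eq_one_iff_adj.mpr hadj
  have hba : G.dist b a = 1 := dist_eq_one_iff_adj.mpr hadj.symm
  obtain ⟨p⟩ := hc.preconnected t a
  rcases reachable_deleteEdges_or (b := b) p with h | h
  · left
    have := (dist_cross_bridge ht hadj h (Reachable.refl b)).1
    omega
  · right
    have h' : (G.deleteEdges {s(b,a)}).Reachable t b := by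
      rw [Sym2.eq_swap]; exact h
    have := (dist_cross_bridge ht hadj.symm h' (Reachable.refl a)).1
    omega

/-- at most one neighbor of `w` is closer to `t` -/
lemma dist_two_nbrs (ht : G.IsTree) {w z1 z2 : V} (h1 : G.Adj w z1) (h2 : G.Adj w z2)
    (hne : z1 ≠ z2) (t : V) :
    G.dist t z1 = G.dist t w + 1 ∨ G.dist t z2 = G.dist t w + 1 := by
  have hc := ht.isConnected
  obtain ⟨p⟩ := hc.preconnected t w
  rcases reachable_deleteEdges_or (b := z1) p with h | h
  · left
    have h1' : G.dist w z1 = 1 := dist_eq_one_iff_adj.mpr h1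
    have := (dist_cross_bridge ht h1 h (Reachable.refl z1)).1
    omega
  · right
    have h2' : G.dist w z2 = 1 := dist_eq_one_iff_adj.mpr h2
    have hwz2 : (G.deleteEdges {s(z1,w)}).Reachable w z2 := by
      refine Adj.reachable ?_
      rw [deleteEdges_adj]
      refine ⟨h2, ?_⟩
      simp only [Set.mem_singleton_iff, Sym2.eq_iff]
      rintro (⟨h', -⟩ | ⟨-, h'⟩)
      · exact h1.ne h'
      · exact hne h'.symm
    have h' : (G.deleteEdges {s(z1,w)}).Reachable t z1 := by
      rw [Sym2.eq_swap]; exact h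
    have := (dist_cross_bridge ht h1.symm h' hwz2).2
    omega


lemma dist_getVert_le (hc : G.Connected) {x y : V} (p : G.Walk x y) (i : ℕ) :
    G.dist x (p.getVert i) ≤ i := by
  induction p generalizing i with
  | nil =>
    rw [SimpleGraph.Walk.getVert_of_length_le _ (by simp), SimpleGraph.dist_self]
    exact Nat.zero_le _
  | @cons t t' a h q ih =>
    cases i with
    | zero => simp [SimpleGraph.Walk.getVert]
    | succ n =>
      have h1 : G.dist t t' = 1 := dist_eq_one_iff_adj.mpr h
      have h2 : G.dist t (q.getVert n) ≤ G.dist t t' + G.dist t' (q.getVert n) :=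
        hc.dist_triangle
      have h3 : (Walk.cons h q).getVert (n+1) = q.getVert n := by
        simp [SimpleGraph.Walk.getVert_cons_succ]
      rw [h3]
      have := ih n
      omega

lemma getVert_dist_le (hc : G.Connected) {x y : V} (p : G.Walk x y) {i : ℕ} (hi : i ≤ p.length) :
    G.dist (p.getVert i) y ≤ p.length - i := by
  have h1 := dist_getVert_le hc p.reverse (p.length - i)
  rw [SimpleGraph.Walk.getVert_reverse] at h1
  have h2 : p.length - (p.length - i) = i := by omega
  rw [h2] at h1
  rw [dist_comm]
  simpa using h1

lemma geodesic_getVert (hc : G.Connected) {x y : V} (p : G.Walk x y)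
    (hlen : p.length = G.dist x y) {i : ℕ} (hi : i ≤ p.length) :
    G.dist x (p.getVert i) = i ∧ G.dist (p.getVert i) y = p.length - i := by
  have h1 := dist_getVert_le hc p i
  have h2 := getVert_dist_le hc p hi
  have h3 : G.dist x y ≤ G.dist x (p.getVert i) + G.dist (p.getVert i) y := hc.dist_triangle
  omega
lemma getVert_mem_support {x y : V} (p : G.Walk x y) {i : ℕ} (hi : i ≤ p.length) :
    p.getVert i ∈ p.support :=
  SimpleGraph.Walk.mem_support_iff_exists_getVert.mpr ⟨i, rfl, hi⟩

lemma even_dist_sum (ht : G.IsTree) (x y : V) :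
    ∀ n : ℕ, ∀ u : V, G.dist u x = n → (G.dist u x + G.dist u y + G.dist x y) % 2 = 0 := by
  have hc := ht.isConnected
  intro n
  induction n with
  | zero =>
    intro u h
    have hux : u = x := (hc.dist_eq_zero_iff).mp h
    subst hux
    have : G.dist u y = G.dist y u := dist_comm ..
    rw [dist_comm (u := u) (v := y)] at *
    omega
  | succ n ih =>
    intro u h
    obtain ⟨p, hp⟩ := (hc.preconnected u x).exists_walk_length_eq_dist
    have hlen : 0 < p.length := by omega
    have hgv := geodesic_getVert hc p hp (i := 1) (by omega)
    have hd : G.dist (p.getVert 1) x = n := by omega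
    have hadj : G.Adj u (p.getVert 1) := by
      have := p.adj_getVert_succ (i := 0) hlen
      simpa using this
    have ihh := ih (p.getVert 1) hd
    rcases dist_nbr ht hadj y with h' | h' <;>
      rw [dist_comm (u := y) (v := p.getVert 1), dist_comm (u := y) (v := u)] at h' <;> omega

/-- key fork lemma: if `m` is on the geodesic between `x` and `y`, then every
vertex `u` sees `m` on its geodesic to `x` or on its geodesic to `y`. -/
lemma tree_fork (ht : G.IsTree) {x y m : V}
    (hxy : G.dist x m + G.dist m y = G.dist x y) (u : V) :
    G.dist u x = G.dist u m + G.dist m x ∨ G.dist u y = G.dist u m + G.dist m y := by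
  have hc := ht.isConnected
  by_cases hmy : m = y
  · subst hmy
    right
    simp [SimpleGraph.dist_self]
  · have hk' : 0 < G.dist m y := hc.pos_dist_of_ne hmy
    obtain ⟨q, hq⟩ := (hc.preconnected m y).exists_walk_length_eq_dist
    have hqpos : 0 < q.length := by omega
    set b := q.getVert 1 with hb
    have hgv := geodesic_getVert hc q hq (i := 1) (by omega)
    have hmb : G.Adj m b := by
      have := q.adj_getVert_succ (i := 0) hqpos
      simpa [hb] using this
    have hdmb : G.dist m b = 1 := dist_eq_one_iff_adj.mpr hmb
    have hdby : G.dist b y = G.dist m y - 1 := by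
      rw [hb]; omega
    -- b is reachable to y avoiding the edge m-b
    have hby : (G.deleteEdges {s(m,b)}).Reachable b y := by
      obtain ⟨r, hr⟩ := (hc.preconnected b y).exists_walk_length_eq_dist
      have her : s(m,b) ∉ r.edges := by
        intro her
        have hmr : m ∈ r.support := r.fst_mem_support_of_mem_edges her
        have := dist_add_of_mem_geodesic hc r hr hmr
        have hbm : G.dist b m = 1 := dist_eq_one_iff_adj.mpr hmb.symm
        omega
      exact (r.toDeleteEdges {s(m,b)}
        (by intro e he; simp only [Set.mem_singleton_iff]; rintro rfl; exact her he)).reachable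
    -- x is reachable to m avoiding the edge m-b
    have hxm : (G.deleteEdges {s(m,b)}).Reachable x m := by
      obtain ⟨r, hr⟩ := (hc.preconnected x m).exists_walk_length_eq_dist
      have her : s(m,b) ∉ r.edges := by
        intro her
        have hbr : b ∈ r.support := r.snd_mem_support_of_mem_edges her
        have h1 := dist_add_of_mem_geodesic hc r hr hbr
        have hbm : G.dist b m = 1 := dist_eq_one_iff_adj.mpr hmb.symm
        have h2 : G.dist x y ≤ G.dist x b + G.dist b y := hc.dist_triangle
        omega
      exact (r.toDeleteEdges {s(m,b)}
        (by intro e he; simp only [Set.mem_singleton_iff]; rintro rfl; exact her he)).reachable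
    obtain ⟨p⟩ := hc.preconnected u m
    rcases reachable_deleteEdges_or (b := b) p with hum | hub
    · right
      have := (dist_cross_bridge ht hmb hum hby).1
      omega
    · left
      have hub' : (G.deleteEdges {s(b,m)}).Reachable u b := by
        rw [Sym2.eq_swap]; exact hub
      have hmx : (G.deleteEdges {s(b,m)}).Reachable m x := by
        rw [Sym2.eq_swap]; exact hxm.symm
      have := (dist_cross_bridge ht hmb.symm hub' hmx).2
      have hcm : G.dist m x = G.dist x m := dist_comm ..
      omega


open Classical in
noncomputable def suppV (G : SimpleGraph V) (x : V) : V :=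
  if h : ∃ a, G.neighborSet x = {a} then h.choose else x

lemma neighborSet_leaf {x : V} (hx : isLeaf G x) : G.neighborSet x = {suppV G x} := by
  have h : ∃ a, G.neighborSet x = {a} := by
    rcases Set.ncard_eq_one.mp hx with ⟨a, ha⟩
    exact ⟨a, ha⟩
  simp only [suppV, dif_pos h]
  exact h.choose_spec

lemma adj_supp {x : V} (hx : isLeaf G x) : G.Adj x (suppV G x) := by
  have : suppV G x ∈ G.neighborSet x := by rw [neighborSet_leaf hx]; rfl
  exact this

lemma eq_supp_of_adj {x z : V} (hx : isLeaf G x) (h : G.Adj x z) : z = suppV G x := by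
  have : z ∈ G.neighborSet x := h
  rw [neighborSet_leaf hx] at this
  exact this

/-- distance to a leaf goes through its support -/
lemma leaf_dist (ht : G.IsTree) {x t : V} (hx : isLeaf G x) (htx : t ≠ x) :
    G.dist t x = G.dist t (suppV G x) + 1 := by
  have hc := ht.isConnected
  have hpos : 0 < G.dist t x := hc.pos_dist_of_ne htx
  obtain ⟨p, hp⟩ := (hc.preconnected t x).exists_walk_length_eq_dist
  have hlen : 0 < p.length := by omega
  have hadj : G.Adj (p.getVert (p.length - 1)) x := by
    have := p.adj_getVert_succ (i := p.length - 1) (by omega)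
    have h1 : p.length - 1 + 1 = p.length := by omega
    rw [h1, p.getVert_length] at this
    exact this
  have hz : p.getVert (p.length - 1) = suppV G x := eq_supp_of_adj hx hadj.symm
  have hmem : p.getVert (p.length - 1) ∈ p.support := getVert_mem_support p (by omega)
  rw [hz] at hmem
  have hsplit := dist_add_of_mem_geodesic hc p hp hmem
  have hd1 : G.dist (suppV G x) x = 1 := dist_eq_one_iff_adj.mpr (adj_supp hx).symm
  omega

lemma exists_leaf [Fintype V] (ht : G.IsTree) (hcard : 2 ≤ Fintype.card V) :
    ∃ x : V, isLeaf G x := by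
  classical
  have hc := ht.isConnected
  haveI : Nonempty V := Fintype.card_pos_iff.mp (by omega)
  obtain ⟨⟨u, v⟩, -, hmax⟩ := Finset.exists_max_image (Finset.univ : Finset (V × V))
    (fun p : V × V => G.dist p.1 p.2) Finset.univ_nonempty
  obtain ⟨a, b, hab⟩ := Fintype.exists_pair_of_one_lt_card (α := V) (by omega)
  have hd1 : 0 < G.dist a b := hc.pos_dist_of_ne hab
  have hduv : 0 < G.dist u v := lt_of_lt_of_le hd1 (hmax (a, b) (by simp))
  have hne : u ≠ v := by rintro rfl; simp [SimpleGraph.dist_self] at hduv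
  obtain ⟨p, hp⟩ := (hc.preconnected u v).exists_walk_length_eq_dist
  have hlen : 0 < p.length := by omega
  have hadj : G.Adj (p.getVert (p.length - 1)) v := by
    have := p.adj_getVert_succ (i := p.length - 1) (by omega)
    have h1 : p.length - 1 + 1 = p.length := by omega
    rw [h1, p.getVert_length] at this
    exact this
  refine ⟨v, ?_⟩
  have : G.neighborSet v = {p.getVert (p.length - 1)} := by
    apply Set.eq_singleton_iff_unique_mem.mpr
    refine ⟨hadj.symm, ?_⟩
    intro z hz
    by_contra hzz
    have h2 := dist_two_nbrs ht (hz : G.Adj v z) hadj.symm hzz u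
    rcases h2 with h' | h'
    · have := hmax (u, z) (by simp); simp at this; omega
    · have := hmax (u, p.getVert (p.length - 1)) (by simp); simp at this; omega
  rw [isLeaf, this, Set.ncard_singleton]

lemma adj_leaves_path2 (ht : G.IsTree) {x1 x2 : V} (h1 : isLeaf G x1) (h2 : isLeaf G x2)
    (hadj : G.Adj x1 x2) : Nonempty (G ≃g SimpleGraph.pathGraph 2) := by
  classical
  have hc := ht.isConnected
  have hne : x1 ≠ x2 := hadj.ne
  have hs1 : suppV G x1 = x2 := (eq_supp_of_adj h1 hadj).symm
  have hs2 : suppV G x2 = x1 := (eq_supp_of_adj h2 hadj.symm).symm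
  have hV : ∀ z : V, z = x1 ∨ z = x2 := by
    intro z
    by_contra hz
    push_neg at hz
    obtain ⟨hz1, hz2⟩ := hz
    have e1 : G.dist z x1 = G.dist z (suppV G x1) + 1 := leaf_dist ht h1 hz1
    have e2 : G.dist z x2 = G.dist z (suppV G x2) + 1 := leaf_dist ht h2 hz2
    rw [hs1] at e1
    rw [hs2] at e2
    omega
  have hx1 : (if (x1 : V) = x1 then (0 : Fin 2) else 1) = 0 := if_pos rfl
  refine ⟨⟨⟨fun v => if v = x1 then (0 : Fin 2) else 1,
    fun i => if i = 0 then x1 else x2, ?_, ?_⟩, ?_⟩⟩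
  · intro v
    rcases hV v with rfl | rfl
    · simp
    · simp [if_neg (Ne.symm hne)]
  · intro i
    fin_cases i
    · simp
    · simp [if_neg (Ne.symm hne)]
  · intro a b
    simp only [Equiv.coe_fn_mk]
    rcases hV a with rfl | rfl <;> rcases hV b with rfl | rfl
    · simp only [if_pos rfl]
      constructor
      · intro h; exact absurd h (SimpleGraph.irrefl _)
      · intro h; exact absurd h (G.irrefl)
    · rw [if_pos rfl, if_neg (Ne.symm hne)]
      simp only [SimpleGraph.pathGraph_adj]
      constructor
      · intro _; exact hadj
      · intro _; norm_num
    · rw [if_pos rfl, if_neg (Ne.symm hne)]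
      simp only [SimpleGraph.pathGraph_adj]
      constructor
      · intro _; exact hadj.symm
      · intro _; norm_num
    · rw [if_neg (Ne.symm hne)]
      constructor
      · intro h; exact absurd h (SimpleGraph.irrefl _)
      · intro h; exact absurd h (G.irrefl)

open Classical in
noncomputable def pickLeaf (G : SimpleGraph V) (v : V) : V :=
  if h : ∃ x, isLeaf G x ∧ G.Adj v x then h.choose else v

lemma pickLeaf_spec {v : V} (h : isSupport G v) :
    isLeaf G (pickLeaf G v) ∧ G.Adj v (pickLeaf G v) := by
  have h' : ∃ x, isLeaf G x ∧ G.Adj v x := h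
  simp only [pickLeaf, dif_pos h']
  exact h'.choose_spec

lemma supp_pickLeaf {v : V} (h : isSupport G v) : suppV G (pickLeaf G v) = v :=
  (eq_supp_of_adj (pickLeaf_spec h).1 (pickLeaf_spec h).2.symm).symm

lemma supp_isSupport {x : V} (hx : isLeaf G x) : isSupport G (suppV G x) :=
  ⟨x, hx, (adj_supp hx).symm⟩

/-- The candidate MLD set: all support vertices together with all leaves except
one chosen leaf per support vertex. -/
def goodSet (G : SimpleGraph V) : Set V :=
  {v | isSupport G v} ∪ {x | isLeaf G x ∧ pickLeaf G (suppV G x) ≠ x}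

lemma support_mem_good {v : V} (h : isSupport G v) : v ∈ goodSet G := Or.inl h

lemma leaf_not_mem_good {x : V} (hx : isLeaf G x) (h : x ∉ goodSet G) :
    pickLeaf G (suppV G x) = x := by
  by_contra hne
  exact h (Or.inr ⟨hx, hne⟩)

lemma support_not_leaf (ht : G.IsTree) (hnp2 : ¬ Nonempty (G ≃g SimpleGraph.pathGraph 2))
    {v : V} (h : isSupport G v) : ¬ isLeaf G v := by
  intro hv
  obtain ⟨x, hx, hadj⟩ := h
  exact hnp2 (adj_leaves_path2 ht hv hx hadj)

lemma goodSet_ncard [Fintype V] (ht : G.IsTree)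
    (hnp2 : ¬ Nonempty (G ≃g SimpleGraph.pathGraph 2)) :
    (goodSet G).ncard = numLeaves G := by
  classical
  set Sup : Set V := {v | isSupport G v} with hSup
  set L : Set V := {x | isLeaf G x} with hL
  set E : Set V := {x | isLeaf G x ∧ pickLeaf G (suppV G x) = x} with hE
  have hgood : goodSet G = Sup ∪ (L \ E) := by
    rw [goodSet]
    congr 1
    ext x
    simp only [hL, hE, Set.mem_setOf_eq, Set.mem_diff, Set.mem_setOf_eq]
    tauto
  have hEL : E ⊆ L := fun x hx => hx.1
  have hdisj : Disjoint Sup (L \ E) := by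
    rw [Set.disjoint_left]
    intro v hv hvL
    exact support_not_leaf ht hnp2 hv hvL.1
  have hEimg : E = pickLeaf G '' Sup := by
    ext x
    constructor
    · rintro ⟨hx, hpick⟩
      exact ⟨suppV G x, supp_isSupport hx, hpick⟩
    · rintro ⟨v, hv, rfl⟩
      exact ⟨(pickLeaf_spec hv).1, by rw [supp_pickLeaf hv]⟩
  have hinj : Set.InjOn (pickLeaf G) Sup := by
    intro v hv v' hv' heq
    have := supp_pickLeaf (G := G) hv
    rw [heq, supp_pickLeaf hv'] at this
    exact this.symm
  have hcardE : E.ncard = Sup.ncard := by rw [hEimg, Set.ncard_image_of_injOn hinj]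
  have h2 : numLeaves G = L.ncard := rfl
  have h1 : Sup.ncard ≤ L.ncard := by
    rw [← hcardE]; exact Set.ncard_le_ncard hEL (Set.toFinite _)
  rw [hgood, Set.ncard_union_eq hdisj (Set.toFinite _) (Set.toFinite _),
    Set.ncard_diff hEL (Set.toFinite _), hcardE, h2]
  omega

lemma side_lemma [Fintype V] (ht : G.IsTree) {x m : V} {k : ℕ} (hk : 1 ≤ k)
    (hxm : G.dist x m = k)
    (hS : ∀ u ∈ goodSet G, G.dist u x = G.dist u m + k) :
    x = pickLeaf G m := by
  classical
  have hc := ht.isConnected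
  -- the set of vertices on the x-side of m
  set P : Finset V := Finset.univ.filter (fun u => G.dist u x < G.dist u m + k) with hP
  have hxP : x ∈ P := by
    simp only [hP, Finset.mem_filter, Finset.mem_univ, true_and, SimpleGraph.dist_self]
    have : G.dist x m = k := hxm
    omega
  obtain ⟨w, hwP, hwmax⟩ := Finset.exists_max_image P (fun u => G.dist m u) ⟨x, hxP⟩
  simp only [hP, Finset.mem_filter, Finset.mem_univ, true_and] at hwP
  have hwm : w ≠ m := by
    intro rfl'
    subst rfl'
    rw [SimpleGraph.dist_self, dist_comm] at hwP
    omega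
  -- every neighbor of w is closer to m
  have hnbr : ∀ z, G.Adj w z → G.dist m z + 1 = G.dist m w := by
    intro z hz
    rcases dist_nbr ht hz m with h' | h'
    · exfalso
      have hzP : z ∈ P := by
        simp only [hP, Finset.mem_filter, Finset.mem_univ, true_and]
        have h1 : G.dist z x ≤ G.dist z w + G.dist w x := hc.dist_triangle
        have h2 : G.dist z w = 1 := dist_eq_one_iff_adj.mpr hz.symm
        have h3 : G.dist z m = G.dist m z := dist_comm ..
        have h4 : G.dist w m = G.dist m w := dist_comm ..
        omega
      have := hwmax z hzP
      omega
    · exact h'.symm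
  -- w has a unique neighbor, so it is a leaf
  have hdwm : 0 < G.dist w m := hc.pos_dist_of_ne hwm
  obtain ⟨p, hp⟩ := (hc.preconnected w m).exists_walk_length_eq_dist
  have hlen : 0 < p.length := by omega
  have hadj0 : G.Adj w (p.getVert 1) := by
    have := p.adj_getVert_succ (i := 0) hlen
    simpa using this
  have huniq : G.neighborSet w = {p.getVert 1} := by
    apply Set.eq_singleton_iff_unique_mem.mpr
    refine ⟨hadj0, ?_⟩
    intro z hz
    by_contra hzz
    rcases dist_two_nbrs ht (hz : G.Adj w z) hadj0 hzz m with h' | h'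
    · have := hnbr z (hz : G.Adj w z); omega
    · have := hnbr _ hadj0; omega
  have hwleaf : isLeaf G w := by rw [isLeaf, huniq, Set.ncard_singleton]
  have hsuppw : suppV G w = p.getVert 1 := (eq_supp_of_adj hwleaf hadj0).symm
  -- w is not in the good set
  have hwgood : w ∉ goodSet G := by
    intro hw
    have := hS w hw
    omega
  have hpick : pickLeaf G (suppV G w) = w := leaf_not_mem_good hwleaf hwgood
  set v := suppV G w with hv
  have hvsupp : isSupport G v := supp_isSupport hwleaf
  have hvgood : v ∈ goodSet G := support_mem_good hvsupp
  have hSv : G.dist v x = G.dist v m + k := hS v hvgood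
  have hadjwv : G.Adj w v := adj_supp hwleaf
  have hmv : G.dist m v + 1 = G.dist m w := hnbr v hadjwv
  -- w must be x itself
  have hwx : w = x := by
    by_contra hwx
    have h1 : G.dist x w = G.dist x v + 1 := leaf_dist ht hwleaf (Ne.symm hwx)
    have c1 : G.dist x w = G.dist w x := dist_comm ..
    have c2 : G.dist x v = G.dist v x := dist_comm ..
    have c3 : G.dist v m = G.dist m v := dist_comm ..
    have c4 : G.dist w m = G.dist m w := dist_comm ..
    omega
  subst hwx
  -- then k = 1 and v = m
  have hd1 : G.dist v w = 1 := dist_eq_one_iff_adj.mpr hadjwv.symm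
  have c2 : G.dist v w = G.dist w v := dist_comm ..
  have hvm : G.dist v m = 0 := by omega
  have : v = m := hc.dist_eq_zero_iff.mp hvm
  rw [← this]
  exact hpick.symm

lemma good_resolving [Fintype V] (ht : G.IsTree) (hcard : 2 ≤ Fintype.card V) :
    isResolvingSet G (goodSet G) := by
  classical
  have hc := ht.isConnected
  intro x y hne
  by_contra hcon
  push_neg at hcon
  obtain ⟨z, hz⟩ := exists_leaf ht hcard
  have hu0 : suppV G z ∈ goodSet G := support_mem_good (supp_isSupport hz)
  -- the distance between x and y is even
  have hpar := even_dist_sum ht x y (G.dist (suppV G z) x) (suppV G z) rfl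
  have heq0 := hcon (suppV G z) hu0
  have hpos : 0 < G.dist x y := hc.pos_dist_of_ne hne
  obtain ⟨k, hk2⟩ : ∃ k, G.dist x y = 2 * k := ⟨G.dist x y / 2, by omega⟩
  have hk : 1 ≤ k := by omega
  -- midpoint m
  obtain ⟨p, hp⟩ := (hc.preconnected x y).exists_walk_length_eq_dist
  set m := p.getVert k with hm
  obtain ⟨hgv1, hgv2⟩ := geodesic_getVert hc p hp (i := k) (by omega)
  have hxm : G.dist x m = k := by rw [hm]; omega
  have hmy : G.dist m y = k := by rw [hm]; omega
  have hsum : G.dist x m + G.dist m y = G.dist x y := by omega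
  have hfork := tree_fork ht hsum
  have hcmx : G.dist m x = k := by rw [SimpleGraph.dist_comm]; exact hxm
  have hQx : ∀ u ∈ goodSet G, G.dist u x = G.dist u m + k := by
    intro u hu
    rcases hfork u with h' | h'
    · rw [h', hcmx]
    · rw [hcon u hu, h', hmy]
  have hQy : ∀ u ∈ goodSet G, G.dist u y = G.dist u m + k := by
    intro u hu
    rw [← hcon u hu]
    exact hQx u hu
  have h1 : x = pickLeaf G m := side_lemma ht hk hxm hQx
  have h2 : y = pickLeaf G m := side_lemma ht hk (by rw [SimpleGraph.dist_comm]; exact hmy) hQy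
  exact hne (h1.trans h2.symm)

lemma good_dominating [Fintype V] (ht : G.IsTree)
    (hcond : ∀ u : V, ∃ x : V, isLeaf G x ∧ G.dist u x ≤ 2) :
    isDominatingSet G (goodSet G) := by
  classical
  have hc := ht.isConnected
  intro u hu
  by_cases hleaf : isLeaf G u
  · exact ⟨suppV G u, support_mem_good (supp_isSupport hleaf), (adj_supp hleaf).symm⟩
  · have hnsupp : ¬ isSupport G u := fun h => hu (support_mem_good h)
    obtain ⟨z, hz, hdz⟩ := hcond u
    have hne : u ≠ z := by rintro rfl; exact hleaf hz
    have h0 : 0 < G.dist u z := hc.pos_dist_of_ne hne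
    have h1 : G.dist u z ≠ 1 := by
      intro h1
      exact hnsupp ⟨z, hz, dist_eq_one_iff_adj.mp h1⟩
    have h2 : G.dist u z = 2 := by omega
    obtain ⟨p, hp⟩ := (hc.preconnected u z).exists_walk_length_eq_dist
    have hlen : p.length = 2 := by omega
    have hadj1 : G.Adj u (p.getVert 1) := by
      have := p.adj_getVert_succ (i := 0) (by omega)
      simpa using this
    have hadj2 : G.Adj (p.getVert 1) z := by
      have := p.adj_getVert_succ (i := 1) (by omega)
      have h3 : (1 : ℕ) + 1 = p.length := by omega
      rw [h3, p.getVert_length] at this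
      exact this
    exact ⟨p.getVert 1, support_mem_good ⟨z, hz, hadj2⟩, hadj1.symm⟩

open Classical in
/-- the injection of leaves into an MLD set -/
noncomputable def leafInj (G : SimpleGraph V) (S : Set V) (x : V) : V :=
  if x ∈ S then x else suppV G x

lemma leafInj_maps [Fintype V] (ht : G.IsTree) {S : Set V} (hS : isMLDSet G S) :
    ∀ x, isLeaf G x → leafInj G S x ∈ S := by
  intro x hx
  by_cases hxS : x ∈ S
  · rw [leafInj, if_pos hxS]; exact hxS
  · rw [leafInj, if_neg hxS]
    obtain ⟨s, hsS, hadj⟩ := hS.2 x hxS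
    have : s = suppV G x := eq_supp_of_adj hx hadj.symm
    rw [← this]; exact hsS

lemma leafInj_inj [Fintype V] (ht : G.IsTree)
    (hnp2 : ¬ Nonempty (G ≃g SimpleGraph.pathGraph 2)) {S : Set V} (hS : isMLDSet G S) :
    Set.InjOn (leafInj G S) {x | isLeaf G x} := by
  intro x1 hx1 x2 hx2 heq
  simp only [Set.mem_setOf_eq] at hx1 hx2
  by_contra hne
  by_cases h1 : x1 ∈ S <;> by_cases h2 : x2 ∈ S
  · rw [leafInj, if_pos h1, leafInj, if_pos h2] at heq; exact hne heq
  · rw [leafInj, if_pos h1, leafInj, if_neg h2] at heq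
    -- x1 = suppV x2, two adjacent leaves
    have hadj : G.Adj x2 x1 := by rw [heq]; exact adj_supp hx2
    exact hnp2 (adj_leaves_path2 ht hx2 hx1 hadj)
  · rw [leafInj, if_neg h1, leafInj, if_pos h2] at heq
    have hadj : G.Adj x1 x2 := by rw [← heq]; exact adj_supp hx1
    exact hnp2 (adj_leaves_path2 ht hx1 hx2 hadj)
  · rw [leafInj, if_neg h1, leafInj, if_neg h2] at heq
    obtain ⟨u, huS, hud⟩ := hS.1 x1 x2 hne
    have hu1 : u ≠ x1 := by rintro rfl; exact h1 huS
    have hu2 : u ≠ x2 := by rintro rfl; exact h2 huS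
    have e1 : G.dist u x1 = G.dist u (suppV G x1) + 1 := leaf_dist ht hx1 hu1
    have e2 : G.dist u x2 = G.dist u (suppV G x2) + 1 := leaf_dist ht hx2 hu2
    rw [heq] at e1
    omega

lemma mld_ge_leaves [Fintype V] (ht : G.IsTree)
    (hnp2 : ¬ Nonempty (G ≃g SimpleGraph.pathGraph 2)) {S : Set V} (hS : isMLDSet G S) :
    numLeaves G ≤ S.ncard := by
  classical
  have h1 : (leafInj G S '' {x | isLeaf G x}).ncard = numLeaves G :=
    Set.ncard_image_of_injOn (leafInj_inj ht hnp2 hS)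
  rw [← h1]
  apply Set.ncard_le_ncard _ (Set.toFinite _)
  rintro _ ⟨x, hx, rfl⟩
  exact leafInj_maps ht hS x hx

lemma mld_ge_leaves_succ [Fintype V] (ht : G.IsTree)
    (hnp2 : ¬ Nonempty (G ≃g SimpleGraph.pathGraph 2)) {u0 : V}
    (hu0 : ∀ x, isLeaf G x → 3 ≤ G.dist u0 x) {S : Set V} (hS : isMLDSet G S) :
    numLeaves G + 1 ≤ S.ncard := by
  classical
  have hc := ht.isConnected
  -- an element of S close to u0
  obtain ⟨s, hsS, hsd⟩ : ∃ s ∈ S, G.dist s u0 ≤ 1 := by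
    by_cases h : u0 ∈ S
    · exact ⟨u0, h, by simp [SimpleGraph.dist_self]⟩
    · obtain ⟨s, hsS, hadj⟩ := hS.2 u0 h
      exact ⟨s, hsS, le_of_eq (dist_eq_one_iff_adj.mpr hadj)⟩
  have hnotin : s ∉ leafInj G S '' {x | isLeaf G x} := by
    rintro ⟨x, hx, rfl⟩
    simp only [Set.mem_setOf_eq] at hx
    have h3 := hu0 x hx
    by_cases hxS : x ∈ S
    · rw [leafInj, if_pos hxS] at *
      have : G.dist u0 x = G.dist x u0 := SimpleGraph.dist_comm ..
      omega
    · rw [leafInj, if_neg hxS] at *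
      have h4 : G.dist u0 x ≤ G.dist u0 (suppV G x) + G.dist (suppV G x) x := hc.dist_triangle
      have h5 : G.dist (suppV G x) x = 1 := dist_eq_one_iff_adj.mpr (adj_supp hx).symm
      have h6 : G.dist u0 (suppV G x) = G.dist (suppV G x) u0 := SimpleGraph.dist_comm ..
      omega
  have hss : leafInj G S '' {x | isLeaf G x} ⊂ S := by
    constructor
    · rintro _ ⟨x, hx, rfl⟩; exact leafInj_maps ht hS x hx
    · intro hsub
      exact hnotin (hsub hsS)
  have h1 : (leafInj G S '' {x | isLeaf G x}).ncard = numLeaves G :=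
    Set.ncard_image_of_injOn (leafInj_inj ht hnp2 hS)
  have := Set.ncard_lt_ncard hss (Set.toFinite _)
  omega

lemma univ_mld_s7 (hc : G.Connected) : isMLDSet G (Set.univ : Set V) := by
  constructor
  · intro x y hne
    refine ⟨x, Set.mem_univ x, ?_⟩
    rw [SimpleGraph.dist_self]
    have := hc.pos_dist_of_ne hne
    omega
  · intro x hx
    exact absurd (Set.mem_univ x) hx

end MLDAux

theorem stmt7 {V : Type*} [Fintype V] (G : SimpleGraph V)
    (htree : G.IsTree) (hcard : 2 ≤ Fintype.card V)
    (hnp2 : ¬ Nonempty (G ≃g SimpleGraph.pathGraph 2)) :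
    mldNum G = numLeaves G ↔
      ∀ u : V, ∃ x : V, isLeaf G x ∧ G.dist u x ≤ 2 := by
  classical
  have hc := htree.isConnected
  set T := {n | ∃ S : Set V, isMLDSet G S ∧ S.ncard = n} with hT
  have hTne : T.Nonempty := ⟨(Set.univ : Set V).ncard, Set.univ, univ_mld_s7 hc, rfl⟩
  have hmld : mldNum G = sInf T := rfl
  obtain ⟨S₀, hS₀, hc₀⟩ := Nat.sInf_mem hTne
  constructor
  · intro h u
    by_contra hcon
    push_neg at hcon
    have hu0 : ∀ x, isLeaf G x → 3 ≤ G.dist u x := by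
      intro x hx
      have := hcon x hx
      omega
    have := mld_ge_leaves_succ htree hnp2 hu0 hS₀
    rw [hmld] at h
    omega
  · intro hcond
    have hgood : isMLDSet G (goodSet G) :=
      ⟨good_resolving htree hcard, good_dominating htree hcond⟩
    have hle : sInf T ≤ numLeaves G :=
      Nat.sInf_le ⟨goodSet G, hgood, goodSet_ncard htree hnp2⟩
    have hge := mld_ge_leaves htree hnp2 hS₀
    rw [hmld]
    omega
end

section
/- Let T be a finite tree of order at least 2 different from the path P_2. Then γ(T) = |S(T)| if and only if for every vertex u of T there exists a leaf at distance at most 2 from u. -/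
open SimpleGraph

variable {V : Type*}

section AuxStmt8

attribute [local instance] Classical.propDecidable

variable {V : Type*} [Fintype V] {G : SimpleGraph V}

/-- the unique neighbor of a leaf (junk otherwise). -/
noncomputable def suppOf (G : SimpleGraph V) (x : V) : V :=
  if h : ∃ s, G.Adj x s then h.choose else x

lemma suppOf_adj {x : V} (hx : isLeaf G x) : G.Adj x (suppOf G x) := by
  obtain ⟨s, hs⟩ := Set.ncard_eq_one.mp hx
  have hadj : G.Adj x s := by
    have : s ∈ G.neighborSet x := by rw [hs]; rfl
    exact this
  have h : ∃ s, G.Adj x s := ⟨s, hadj⟩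
  rw [suppOf, dif_pos h]
  exact h.choose_spec

lemma adj_leaf_eq_suppOf {x s : V} (hx : isLeaf G x) (h : G.Adj x s) : s = suppOf G x := by
  obtain ⟨t, ht⟩ := Set.ncard_eq_one.mp hx
  have h1 : s ∈ G.neighborSet x := h
  have h2 : suppOf G x ∈ G.neighborSet x := suppOf_adj hx
  rw [ht, Set.mem_singleton_iff] at h1 h2
  rw [h1, h2]

lemma suppOf_isSupport {x : V} (hx : isLeaf G x) : isSupport G (suppOf G x) :=
  ⟨x, hx, (suppOf_adj hx).symm⟩

lemma walk_closed {A : Set V} (hcl : ∀ x ∈ A, ∀ y, G.Adj x y → y ∈ A) :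
    ∀ {u v : V}, G.Walk u v → u ∈ A → v ∈ A := by
  intro u v p
  induction p with
  | nil => exact id
  | cons h _ ih => exact fun hu => ih (hcl _ hu _ h)

lemma not_adj_leaves (hc : G.Connected) (h3 : 3 ≤ Fintype.card V) {x y : V}
    (hx : isLeaf G x) (hy : isLeaf G y) : ¬ G.Adj x y := by
  intro hadj
  have hcl : ∀ a ∈ ({x, y} : Set V), ∀ b, G.Adj a b → b ∈ ({x, y} : Set V) := by
    rintro a (rfl | rfl) b hb
    · have h1 : b = suppOf G a := adj_leaf_eq_suppOf hx hb
      have h2 : y = suppOf G a := adj_leaf_eq_suppOf hx hadj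
      exact Set.mem_insert_iff.mpr (Or.inr (Set.mem_singleton_iff.mpr (h1.trans h2.symm)))
    · have h1 : b = suppOf G a := adj_leaf_eq_suppOf hy hb
      have h2 : x = suppOf G a := adj_leaf_eq_suppOf hy hadj.symm
      exact Set.mem_insert_iff.mpr (Or.inl (h1.trans h2.symm))
  have huniv : (Set.univ : Set V) ⊆ {x, y} := fun v _ => by
    obtain ⟨p⟩ := hc.preconnected x v
    exact walk_closed hcl p (Set.mem_insert _ _)
  have hle : (Set.univ : Set V).ncard ≤ 2 := by
    calc (Set.univ : Set V).ncard ≤ ({x, y} : Set V).ncard :=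
          Set.ncard_le_ncard huniv (Set.toFinite _)
      _ ≤ 2 := by
          refine (Set.ncard_insert_le _ _).trans ?_
          simp
  rw [Set.ncard_univ, Nat.card_eq_fintype_card] at hle
  omega

lemma leaf_not_support (hc : G.Connected) (h3 : 3 ≤ Fintype.card V) {x : V}
    (hx : isLeaf G x) : ¬ isSupport G x := by
  rintro ⟨z, hz, hadj⟩
  exact not_adj_leaves hc h3 hx hz hadj

lemma exists_support_adj (hc : G.Connected) {v : V} (hv : ¬ isSupport G v)
    {x : V} (hx : isLeaf G x) (hd : G.dist v x ≤ 2) :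
    ∃ u, isSupport G u ∧ G.Adj u v := by
  obtain ⟨p, hp⟩ := (hc.preconnected v x).exists_walk_length_eq_dist
  have hlen : p.length ≤ 2 := hp.trans_le hd
  clear hp hd
  cases p with
  | nil =>
    exact ⟨suppOf G v, suppOf_isSupport hx, (suppOf_adj hx).symm⟩
  | cons h q =>
    cases q with
    | nil => exact absurd ⟨x, hx, h⟩ hv
    | cons h' r =>
      cases r with
      | nil => exact ⟨_, ⟨x, hx, h'⟩, h.symm⟩
      | cons h'' s => simp [SimpleGraph.Walk.length_cons] at hlen

lemma support_dom_iff (hc : G.Connected) :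
    isDominatingSet G {u | isSupport G u} ↔
      ∀ u : V, ∃ x : V, isLeaf G x ∧ G.dist u x ≤ 2 := by
  constructor
  · intro hdom u
    by_cases hu : isLeaf G u
    · exact ⟨u, hu, by simp [SimpleGraph.dist_self]⟩
    by_cases hs : isSupport G u
    · obtain ⟨x, hx, hadj⟩ := hs
      exact ⟨x, hx, (SimpleGraph.dist_le hadj.toWalk).trans (by simp)⟩
    · obtain ⟨s, hsS, hadj⟩ := hdom u hs
      obtain ⟨x, hx, hadj'⟩ := hsS
      refine ⟨x, hx, ?_⟩
      exact (SimpleGraph.dist_le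
        (SimpleGraph.Walk.cons hadj.symm
          (SimpleGraph.Walk.cons hadj' SimpleGraph.Walk.nil))).trans (by simp)
  · intro h v hv
    obtain ⟨x, hx, hd⟩ := h v
    exact exists_support_adj hc hv hx hd

/-- a chosen leaf adjacent to a support vertex (junk otherwise). -/
noncomputable def leafOf (G : SimpleGraph V) (u : V) : V :=
  if h : isSupport G u then h.choose else u

lemma leafOf_spec {u : V} (h : isSupport G u) :
    isLeaf G (leafOf G u) ∧ G.Adj u (leafOf G u) := by
  rw [leafOf, dif_pos h]
  exact h.choose_spec

lemma ncard_support_le_dom (hc : G.Connected) (h3 : 3 ≤ Fintype.card V)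
    {D : Set V} (hD : isDominatingSet G D) :
    {u | isSupport G u}.ncard ≤ D.ncard := by
  apply Set.ncard_le_ncard_of_injOn (fun u => if u ∈ D then u else leafOf G u)
  · intro u hu
    simp only [Set.mem_setOf_eq] at hu
    by_cases h : u ∈ D
    · rw [if_pos h]; exact h
    · rw [if_neg h]
      obtain ⟨hleaf, hadj⟩ := leafOf_spec hu
      by_contra hxD
      obtain ⟨d, hdD, hadj'⟩ := hD _ hxD
      have h1 : u = suppOf G (leafOf G u) := adj_leaf_eq_suppOf hleaf hadj.symm
      have h2 : d = suppOf G (leafOf G u) := adj_leaf_eq_suppOf hleaf hadj'.symm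
      rw [h1, ← h2] at h
      exact h hdD
  · intro u hu u' hu' heq
    simp only [Set.mem_setOf_eq] at hu hu'
    dsimp only at heq
    by_cases h1 : u ∈ D <;> by_cases h2 : u' ∈ D
    · rwa [if_pos h1, if_pos h2] at heq
    · rw [if_pos h1, if_neg h2] at heq
      exact absurd hu (leaf_not_support hc h3 (by rw [heq]; exact (leafOf_spec hu').1))
    · rw [if_neg h1, if_pos h2] at heq
      exact absurd hu' (leaf_not_support hc h3 (by rw [← heq]; exact (leafOf_spec hu).1))
    · rw [if_neg h1, if_neg h2] at heq
      have e1 : u = suppOf G (leafOf G u) :=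
        adj_leaf_eq_suppOf (leafOf_spec hu).1 (leafOf_spec hu).2.symm
      have e2 : u' = suppOf G (leafOf G u') :=
        adj_leaf_eq_suppOf (leafOf_spec hu').1 (leafOf_spec hu').2.symm
      rw [e1, e2, heq]

lemma dom_set_nonempty (G : SimpleGraph V) :
    {n | ∃ S : Set V, isDominatingSet G S ∧ S.ncard = n}.Nonempty :=
  ⟨(Set.univ : Set V).ncard, Set.univ, fun x hx => absurd (Set.mem_univ x) hx, rfl⟩

lemma exists_min_dom (G : SimpleGraph V) :
    ∃ D : Set V, isDominatingSet G D ∧ D.ncard = domNum G :=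
  Nat.sInf_mem (dom_set_nonempty G)

end AuxStmt8

theorem stmt8 {V : Type*} [Fintype V] (G : SimpleGraph V)
    (htree : G.IsTree) (hcard : 2 ≤ Fintype.card V)
    (hnp2 : ¬ Nonempty (G ≃g SimpleGraph.pathGraph 2)) :
    domNum G = {u : V | isSupport G u}.ncard ↔
      ∀ u : V, ∃ x : V, isLeaf G x ∧ G.dist u x ≤ 2 := by
  classical
  have hc : G.Connected := htree.isConnected
  have h3 : 3 ≤ Fintype.card V := by
    by_contra h
    have h2 : Fintype.card V = 2 := by omega
    apply hnp2
    have hpair : ∀ a b : V, a ≠ b → ∀ c : V, c = a ∨ c = b := by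
      intro a b hab c
      by_contra hcon
      push_neg at hcon
      have : 2 < Fintype.card V :=
        Fintype.two_lt_card_iff.mpr ⟨c, a, b, hcon.1, hcon.2, hab⟩
      omega
    have hGtop : G = ⊤ := by
      ext a b
      simp only [SimpleGraph.top_adj]
      constructor
      · exact fun h => h.ne
      · intro hne
        obtain ⟨p⟩ := hc.preconnected a b
        cases p with
        | nil => exact absurd rfl hne
        | cons h q =>
          rename_i c
          rcases hpair a b hne c with rfl | rfl
          · exact absurd rfl h.ne
          · exact h
    refine ⟨?_⟩
    rw [hGtop, SimpleGraph.pathGraph_two_eq_top]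
    exact SimpleGraph.Iso.completeGraph (Fintype.equivFinOfCardEq h2)
  constructor
  · -- forward
    intro heq
    obtain ⟨D, hD, hDcard⟩ := exists_min_dom G
    set f : V → V := fun v => if isLeaf G v then suppOf G v else v with hf
    set D' : Set V := f '' D with hD'
    have hfleaf : ∀ v, isLeaf G v → f v = suppOf G v := fun v hv => by simp [hf, hv]
    have hfnl : ∀ v, ¬ isLeaf G v → f v = v := fun v hv => by simp [hf, hv]
    have hdom' : isDominatingSet G D' := by
      intro v hv
      by_cases hvD : v ∈ D
      · by_cases hvl : isLeaf G v
        · exact ⟨suppOf G v, ⟨v, hvD, (hfleaf v hvl)⟩, (suppOf_adj hvl).symm⟩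
        · exact absurd ⟨v, hvD, hfnl v hvl⟩ hv
      · obtain ⟨d, hdD, hadj⟩ := hD v hvD
        by_cases hdl : isLeaf G d
        · exfalso
          have hvs : v = suppOf G d := adj_leaf_eq_suppOf hdl hadj
          exact hv ⟨d, hdD, ((hfleaf d hdl).trans hvs.symm)⟩
        · exact ⟨d, ⟨d, hdD, hfnl d hdl⟩, hadj⟩
    have hSsub : {u | isSupport G u} ⊆ D' := by
      intro s hs
      obtain ⟨x, hx, hadj⟩ := hs
      have hxD' : x ∉ D' := by
        rintro ⟨v, hvD, hvx⟩
        by_cases hvl : isLeaf G v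
        · rw [hfleaf v hvl] at hvx
          exact leaf_not_support hc h3 (hvx ▸ hx) (suppOf_isSupport hvl)
        · rw [hfnl v hvl] at hvx
          exact hvl (hvx ▸ hx)
      obtain ⟨d, hdD', hadj'⟩ := hdom' x hxD'
      have e1 : d = suppOf G x := adj_leaf_eq_suppOf hx hadj'.symm
      have e2 : s = suppOf G x := adj_leaf_eq_suppOf hx hadj.symm
      rw [e2, ← e1]
      exact hdD'
    have hle : D'.ncard ≤ {u | isSupport G u}.ncard := by
      calc D'.ncard ≤ D.ncard := Set.ncard_image_le (Set.toFinite D)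
        _ = {u | isSupport G u}.ncard := by rw [hDcard, heq]
    have hSD' : {u | isSupport G u} = D' :=
      Set.eq_of_subset_of_ncard_le hSsub hle (Set.toFinite _)
    exact (support_dom_iff hc).mp (hSD' ▸ hdom')
  · -- backward
    intro hcond
    have hdom : isDominatingSet G {u | isSupport G u} := (support_dom_iff hc).mpr hcond
    apply le_antisymm
    · exact Nat.sInf_le ⟨{u | isSupport G u}, hdom, rfl⟩
    · obtain ⟨D, hD, hDcard⟩ := exists_min_dom G
      rw [← hDcard]
      exact ncard_support_le_dom hc h3 hD
end

section
/- Let G be a finite simple connected graph of order at least 2 containing no cycle of length 4 and no cycle of length 6 as a subgraph. For every MLD-set S ⊆ V(G), the set S ∪ π(S) is a locating-dominating set of G, where π(S) = ∪_{u,v ∈ S} π(u,v) and, for distinct u,v ∈ S, π(u,v) = {u',v'} if there exists a path (u,u',v',v) of length 3 in G (such a path is unique under the C4- and C6-free hypothesis) and π(u,v) = ∅ otherwise. Consequently, γ_L(G) ≤ γ_M(G)². -/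
open SimpleGraph

variable {V : Type*}

/-- the set `π(S)`: for each pair `u ≠ v` of vertices of `S` joined by a
path `(u, u', v', v)` of length 3, it collects the two inner vertices `u', v'`. -/
def piSet (G : SimpleGraph V) (S : Set V) : Set V :=
  {w | ∃ u ∈ S, ∃ v ∈ S, ∃ u' v' : V, u ≠ v ∧ u ≠ v' ∧ u' ≠ v ∧
    G.Adj u u' ∧ G.Adj u' v' ∧ G.Adj v' v ∧ (w = u' ∨ w = v')}


section AuxStmt11

variable {G : SimpleGraph V}

lemma aux_no4 (hC4C6 : ∀ (x : V) (c : G.Walk x x), c.IsCycle → c.length ≠ 4 ∧ c.length ≠ 6)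
    {a b c d : V} (hab : G.Adj a b) (hbc : G.Adj b c) (hcd : G.Adj c d) (hda : G.Adj d a)
    (hac : a ≠ c) (hbd : b ≠ d) : False := by
  have hba := hab.ne'
  have hcb := hbc.ne'
  have hdc := hcd.ne'
  have had := hda.ne'
  let w : G.Walk a a := .cons hab (.cons hbc (.cons hcd (.cons hda .nil)))
  have hcyc : w.IsCycle := by
    rw [Walk.isCycle_def]
    refine ⟨⟨?_⟩, by simp [w], ?_⟩
    · simp only [w, Walk.edges_cons, Walk.edges_nil]
      simp [List.pairwise_cons, Sym2.eq, Sym2.rel_iff', Prod.mk.injEq, Prod.swap_prod_mk]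
      aesop
    · simp only [w, Walk.support_cons, Walk.support_nil, List.tail_cons]
      simp [List.pairwise_cons]
      aesop
  exact (hC4C6 a w hcyc).1 (by simp [w])

lemma aux_no6 (hC4C6 : ∀ (x : V) (c : G.Walk x x), c.IsCycle → c.length ≠ 4 ∧ c.length ≠ 6)
    {a b c d e f : V} (hab : G.Adj a b) (hbc : G.Adj b c) (hcd : G.Adj c d)
    (hde : G.Adj d e) (hef : G.Adj e f) (hfa : G.Adj f a)
    (hac : a ≠ c) (had : a ≠ d) (hae : a ≠ e) (hbd : b ≠ d) (hbe : b ≠ e) (hbf : b ≠ f)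
    (hce : c ≠ e) (hcf : c ≠ f) (hdf : d ≠ f) : False := by
  have h1 := hab.ne;  have h2 := hbc.ne; have h3 := hcd.ne
  have h4 := hde.ne;  have h5 := hef.ne; have h6 := hfa.ne
  let w : G.Walk a a :=
    .cons hab (.cons hbc (.cons hcd (.cons hde (.cons hef (.cons hfa .nil)))))
  have hcyc : w.IsCycle := by
    rw [Walk.isCycle_def]
    refine ⟨⟨?_⟩, by simp [w], ?_⟩
    · simp only [w, Walk.edges_cons, Walk.edges_nil]
      simp [List.pairwise_cons, Sym2.eq, Sym2.rel_iff', Prod.mk.injEq, Prod.swap_prod_mk]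
      aesop
    · simp only [w, Walk.support_cons, Walk.support_nil, List.tail_cons]
      simp [List.pairwise_cons]
      aesop
  exact (hC4C6 a w hcyc).2 (by simp [w])

lemma aux_exists_pred (hconn : G.Connected) {w x : V} {n : ℕ} (h : G.dist w x = n + 1) :
    ∃ p : V, G.Adj p x ∧ G.dist w p = n := by
  have hne : x ≠ w := by
    rintro rfl
    rw [SimpleGraph.dist_self] at h
    omega
  obtain ⟨q, hq⟩ := hconn.exists_walk_length_eq_dist x w
  obtain ⟨p, hadj, q', rfl⟩ := Walk.exists_eq_cons_of_ne hne q
  have hql : q'.length = n := by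
    have h2 : (Walk.cons hadj q').length = n + 1 := by
      rw [hq, SimpleGraph.dist_comm, h]
    simpa using h2
  refine ⟨p, hadj.symm, le_antisymm ?_ ?_⟩
  · have hle := SimpleGraph.dist_le q'.reverse
    rwa [Walk.length_reverse, hql] at hle
  · have ht := hconn.dist_triangle (u := w) (v := p) (w := x)
    rw [h, SimpleGraph.dist_eq_one_iff_adj.mpr hadj.symm] at ht
    omega

/-- the pruned version of `piSet` keeping only the inner vertices having at most
one neighbour inside `S`. -/
def piStar (G : SimpleGraph V) (S : Set V) : Set V :=
  {w | w ∈ piSet G S ∧ (G.neighborSet w ∩ S).Subsingleton}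

lemma piStar_subset_piSet (G : SimpleGraph V) (S : Set V) : piStar G S ⊆ piSet G S :=
  fun _ hw => hw.1

lemma aux_ld_mono {T₁ T₂ : Set V} (h12 : T₁ ⊆ T₂) (h : isLDSet G T₁) : isLDSet G T₂ := by
  obtain ⟨hdom, hloc⟩ := h
  refine ⟨fun x hx => ?_, fun x hx y hy hxy hEq => ?_⟩
  · obtain ⟨u, hu, hadj⟩ := hdom x (fun h => hx (h12 h))
    exact ⟨u, h12 hu, hadj⟩
  · refine hloc x (fun h => hx (h12 h)) y (fun h => hy (h12 h)) hxy ?_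
    ext t
    constructor
    · rintro ⟨h1, h2⟩
      have : t ∈ G.neighborSet x ∩ T₂ := ⟨h1, h12 h2⟩
      rw [hEq] at this
      exact ⟨this.1, h2⟩
    · rintro ⟨h1, h2⟩
      have : t ∈ G.neighborSet y ∩ T₂ := ⟨h1, h12 h2⟩
      rw [← hEq] at this
      exact ⟨this.1, h2⟩

lemma piStar_isLD (hconn : G.Connected)
    (hC4C6 : ∀ (x : V) (c : G.Walk x x), c.IsCycle → c.length ≠ 4 ∧ c.length ≠ 6)
    {S : Set V} (hS : isMLDSet G S) : isLDSet G (S ∪ piStar G S) := by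
  obtain ⟨hres, hdom⟩ := hS
  set T := S ∪ piStar G S with hT
  have hST : S ⊆ T := Set.subset_union_left
  constructor
  · intro x hx
    obtain ⟨u, huS, hux⟩ := hdom x (fun h => hx (hST h))
    exact ⟨u, hST huS, hux⟩
  · intro x hxT y hyT hxy hEq
    have hxS : x ∉ S := fun h => hxT (hST h)
    have hyS : y ∉ S := fun h => hyT (hST h)
    obtain ⟨u, huS, hux⟩ := hdom x hxS
    have huy : G.Adj u y := by
      have h1 : u ∈ G.neighborSet x ∩ T := ⟨hux.symm, hST huS⟩
      rw [hEq] at h1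
      exact h1.1.symm
    have hNx : ∀ t, G.Adj x t → t ∈ T → t = u := by
      intro t hxt htT
      by_contra htu
      have hyt : G.Adj y t := by
        have h1 : t ∈ G.neighborSet x ∩ T := ⟨hxt, htT⟩
        rw [hEq] at h1
        exact h1.1
      exact aux_no4 hC4C6 hxt hyt.symm huy.symm hux hxy htu
    have hNy : ∀ t, G.Adj y t → t ∈ T → t = u := by
      intro t hyt htT
      by_contra htu
      have hxt : G.Adj x t := by
        have h1 : t ∈ G.neighborSet y ∩ T := ⟨hyt, htT⟩
        rw [← hEq] at h1
        exact h1.1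
      exact aux_no4 hC4C6 hxt hyt.symm huy.symm hux hxy htu
    have claimA : ∀ v, v ∉ T → G.Adj u v → (∀ t, G.Adj v t → t ∈ T → t = u) →
        ∀ z, G.Adj z v → z ≠ u → (G.Adj z u ∧ ∀ t ∈ S, G.Adj t z → t = u) := by
      intro v hvT huv hNv z hzv hzu
      have hvS : v ∉ S := fun h => hvT (hST h)
      have key : ∀ t ∈ S, G.Adj t z → t = u := by
        intro t htS htz
        by_contra htu
        have hvpi : v ∈ piSet G S :=
          ⟨t, htS, u, huS, z, v, htu, fun h => hvS (h ▸ htS), hzu, htz, hzv, huv.symm,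
            Or.inr rfl⟩
        have hsub : (G.neighborSet v ∩ S).Subsingleton := by
          intro s₁ hs₁ s₂ hs₂
          rw [hNv s₁ hs₁.1 (hST hs₁.2), hNv s₂ hs₂.1 (hST hs₂.2)]
        exact hvT (Or.inr ⟨hvpi, hsub⟩)
      have hzS : z ∉ S := by
        intro h
        exact hzu (hNv z hzv.symm (hST h))
      obtain ⟨t₀, ht₀S, ht₀z⟩ := hdom z hzS
      have ht₀ := key t₀ ht₀S ht₀z
      exact ⟨(ht₀ ▸ ht₀z).symm, key⟩
    obtain ⟨w, hwS, hwd⟩ := hres x y hxy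
    have hwu : w ≠ u := by
      rintro rfl
      exact hwd (by rw [SimpleGraph.dist_eq_one_iff_adj.mpr hux,
        SimpleGraph.dist_eq_one_iff_adj.mpr huy])
    have hwx : ¬ G.Adj w x := fun h => hwu (hNx w h.symm (hST hwS))
    have hwy : ¬ G.Adj w y := fun h => hwu (hNy w h.symm (hST hwS))
    have hwnex : w ≠ x := fun h => hxS (h ▸ hwS)
    have hwney : w ≠ y := fun h => hyS (h ▸ hwS)
    have bdd : ∀ v, v ∉ T → G.Adj u v → (∀ t, G.Adj v t → t ∈ T → t = u) → ¬G.Adj w v →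
        w ≠ v → G.dist w u ≤ G.dist w v ∧ G.dist w v ≤ G.dist w u + 1 := by
      intro v hvT huv hNv hwv hwvne
      have hub : G.dist w v ≤ G.dist w u + 1 := by
        have h1 := hconn.dist_triangle (u := w) (v := u) (w := v)
        rw [SimpleGraph.dist_eq_one_iff_adj.mpr huv] at h1
        omega
      have hpos : 0 < G.dist w v := hconn.pos_dist_of_ne hwvne
      obtain ⟨p, hpv, hdp⟩ := aux_exists_pred hconn
        (show G.dist w v = (G.dist w v - 1) + 1 by omega)
      by_cases hpu : p = u
      · subst hpu
        omega
      · obtain ⟨hpadj, -⟩ := claimA v hvT huv hNv p hpv hpu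
        have h2 := hconn.dist_triangle (u := w) (v := p) (w := u)
        rw [SimpleGraph.dist_eq_one_iff_adj.mpr hpadj] at h2
        omega
    obtain ⟨hlx, hux2⟩ := bdd x hxT hux hNx hwx hwnex
    obtain ⟨hly, huy2⟩ := bdd y hyT huy hNy hwy hwney
    have core : ∀ v, v ∉ T → G.Adj u v → (∀ t, G.Adj v t → t ∈ T → t = u) → ¬G.Adj w v →
        w ≠ v → G.dist w v = G.dist w u → False := by
      intro v hvT huv hNv hwv hwvne hdv
      have hvS : v ∉ S := fun h => hvT (hST h)
      have hd2 : 2 ≤ G.dist w u := by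
        have h0 : G.dist w v ≠ 0 := (hconn.pos_dist_of_ne hwvne).ne'
        have h1 : G.dist w v ≠ 1 := fun h => hwv (SimpleGraph.dist_eq_one_iff_adj.mp h)
        omega
      obtain ⟨p, hpv, hdp⟩ := aux_exists_pred hconn
        (show G.dist w v = (G.dist w u - 1) + 1 by omega)
      have hpu : p ≠ u := by
        intro h
        rw [h] at hdp
        omega
      obtain ⟨hpadjU, hkey⟩ := claimA v hvT huv hNv p hpv hpu
      have hpT : p ∉ T := fun h => hpu (hNv p hpv.symm h)
      have hpS : p ∉ S := fun h => hpT (hST h)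
      have hwp : ¬ G.Adj w p := fun h => hwu (hkey w hwS h)
      have hwpne : w ≠ p := fun h => hwv (h ▸ hpv)
      have hd3 : 3 ≤ G.dist w u := by
        have h0 : G.dist w p ≠ 0 := (hconn.pos_dist_of_ne hwpne).ne'
        have h1 : G.dist w p ≠ 1 := fun h => hwp (SimpleGraph.dist_eq_one_iff_adj.mp h)
        omega
      obtain ⟨r, hrp, hdr⟩ := aux_exists_pred hconn
        (show G.dist w p = (G.dist w u - 2) + 1 by omega)
      have hru : r ≠ u := by
        intro h
        rw [h] at hdr
        omega
      have hrS : r ∉ S := fun h => hru (hkey r h hrp)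
      obtain ⟨t, htS, htr⟩ := hdom r hrS
      have htu : t ≠ u := by
        intro h
        rw [h] at htr
        have h2 := hconn.dist_triangle (u := w) (v := r) (w := u)
        rw [SimpleGraph.dist_eq_one_iff_adj.mpr htr.symm] at h2
        omega
      have hppi : p ∈ piSet G S :=
        ⟨t, htS, u, huS, r, p, htu, fun h => hpS (h ▸ htS), hru, htr, hrp, hpadjU, Or.inr rfl⟩
      have hsub : (G.neighborSet p ∩ S).Subsingleton := by
        intro s₁ hs₁ s₂ hs₂
        rw [hkey s₁ hs₁.2 hs₁.1.symm, hkey s₂ hs₂.2 hs₂.1.symm]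
      exact hpT (Or.inr ⟨hppi, hsub⟩)
    have hcases : G.dist w x = G.dist w u ∨ G.dist w y = G.dist w u := by omega
    rcases hcases with h | h
    · exact core x hxT hux hNx hwx hwnex h
    · exact core y hyT huy hNy hwy hwney h

lemma piStar_ncard [Fintype V] (hnV : Nonempty V)
    (hC4C6 : ∀ (x : V) (c : G.Walk x x), c.IsCycle → c.length ≠ 4 ∧ c.length ≠ 6)
    (S : Set V) : (piStar G S).ncard ≤ S.ncard * S.ncard - S.ncard := by
  classical
  haveI := hnV
  set P : V → V → V → Prop := fun u v a => u ∈ S ∧ v ∈ S ∧ u ≠ v ∧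
    (G.neighborSet a ∩ S).Subsingleton ∧
    ∃ b, G.Adj u a ∧ G.Adj a b ∧ G.Adj b v ∧ u ≠ b ∧ a ≠ v with hP
  have hPsub : ∀ u v a₁ a₂, P u v a₁ → P u v a₂ → a₁ = a₂ := by
    rintro u v a₁ a₂ ⟨huS, hvS, huv, hsub₁, b₁, hua₁, hab₁, hbv₁, hub₁, hav₁⟩
      ⟨-, -, -, hsub₂, b₂, hua₂, hab₂, hbv₂, hub₂, hav₂⟩
    by_contra hne
    by_cases hb : b₁ = b₂
    · subst hb
      exact aux_no4 hC4C6 hua₁ hab₁ hab₂.symm hua₂.symm hub₁ hne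
    by_cases h12 : a₁ = b₂
    · refine huv (hsub₁ ⟨hua₁.symm, huS⟩ ⟨?_, hvS⟩)
      rw [h12]
      exact hbv₂
    by_cases h21 : a₂ = b₁
    · refine huv (hsub₂ ⟨hua₂.symm, huS⟩ ⟨?_, hvS⟩)
      rw [h21]
      exact hbv₁
    · exact aux_no6 hC4C6 hua₁ hab₁ hbv₁ hbv₂.symm hab₂.symm hua₂.symm
        hub₁ huv hub₂ hav₁ h12 hne hb (fun h => h21 h.symm) (Ne.symm hav₂)
  have hmap : ∀ w ∈ piStar G S, ∃ p : V × V, P p.1 p.2 w := by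
    rintro w ⟨⟨u, huS, v, hvS, a, b, huv, hub, hav, h1, h2, h3, hw⟩, hsub⟩
    rcases hw with rfl | rfl
    · exact ⟨(u, v), huS, hvS, huv, hsub, b, h1, h2, h3, hub, hav⟩
    · exact ⟨(v, u), hvS, huS, Ne.symm huv, hsub, a, h3.symm, h2.symm, h1.symm,
        Ne.symm hav, Ne.symm hub⟩
  set f : V → V × V := fun w =>
    if h : ∃ p : V × V, P p.1 p.2 w then h.choose else Classical.arbitrary _ with hf'
  have hf : ∀ w ∈ piStar G S, f w ∈ S.offDiag := by
    intro w hw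
    have he := hmap w hw
    have hPw : P (f w).1 (f w).2 w := by
      simp only [hf', dif_pos he]
      exact he.choose_spec
    exact Set.mem_offDiag.mpr ⟨hPw.1, hPw.2.1, hPw.2.2.1⟩
  have hinj : Set.InjOn f (piStar G S) := by
    intro w₁ h₁ w₂ h₂ hfe
    have he₁ := hmap w₁ h₁
    have he₂ := hmap w₂ h₂
    have hPw₁ : P (f w₁).1 (f w₁).2 w₁ := by
      simp only [hf', dif_pos he₁]; exact he₁.choose_spec
    have hPw₂ : P (f w₂).1 (f w₂).2 w₂ := by
      simp only [hf', dif_pos he₂]; exact he₂.choose_spec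
    rw [hfe] at hPw₁
    exact hPsub _ _ _ _ hPw₁ hPw₂
  have hfin : S.Finite := S.toFinite
  have h1 := Set.ncard_le_ncard_of_injOn f hf hinj hfin.offDiag
  have h2 : S.offDiag.ncard = S.ncard * S.ncard - S.ncard := by
    have e1 : S.offDiag = ↑(hfin.toFinset.offDiag) := by
      rw [Finset.coe_offDiag, Set.Finite.coe_toFinset]
    rw [e1, Set.ncard_coe_finset, Finset.offDiag_card,
      ← Set.ncard_eq_toFinset_card _ hfin]
  omega

end AuxStmt11

theorem stmt11 {V : Type*} [Fintype V] (G : SimpleGraph V)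
    (hconn : G.Connected) (hcard : 2 ≤ Fintype.card V)
    (hC4C6 : ∀ (x : V) (c : G.Walk x x), c.IsCycle → c.length ≠ 4 ∧ c.length ≠ 6) :
    (∀ S : Set V, isMLDSet G S → isLDSet G (S ∪ piSet G S)) ∧
      ldNum G ≤ mldNum G ^ 2 := by
  have hnV : Nonempty V := Fintype.card_pos_iff.mp (by omega)
  constructor
  · intro S hS
    exact aux_ld_mono
      (Set.union_subset_union_right S (piStar_subset_piSet G S))
      (piStar_isLD hconn hC4C6 hS)
  · have hunivMLD : isMLDSet G (Set.univ : Set V) := by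
      constructor
      · intro x y hxy
        refine ⟨x, Set.mem_univ x, ?_⟩
        rw [SimpleGraph.dist_self]
        exact (hconn.pos_dist_of_ne hxy).ne
      · intro x hx
        exact absurd (Set.mem_univ x) hx
    have hnonempty : {n | ∃ S : Set V, isMLDSet G S ∧ S.ncard = n}.Nonempty :=
      ⟨(Set.univ : Set V).ncard, Set.univ, hunivMLD, rfl⟩
    have hmem : mldNum G ∈ {n | ∃ S : Set V, isMLDSet G S ∧ S.ncard = n} :=
      Nat.sInf_mem hnonempty
    obtain ⟨S, hS, hcardS⟩ := hmem
    have hLD := piStar_isLD hconn hC4C6 hS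
    have hle : ldNum G ≤ (S ∪ piStar G S).ncard :=
      Nat.sInf_le ⟨S ∪ piStar G S, hLD, rfl⟩
    have hu := Set.ncard_union_le S (piStar G S)
    have hc := piStar_ncard hnV hC4C6 S
    have hk : S.ncard ≤ S.ncard * S.ncard := by
      rcases Nat.eq_zero_or_pos S.ncard with h | h
      · simp [h]
      · exact Nat.le_mul_of_pos_left _ h
    rw [← hcardS, pow_two]
    omega
end

section
/- For every positive integer s, the graph G_s satisfies γ_M(G_s) ≤ s + 3 and γ_L(G_s) ≥ 2^{s+1} − 1; consequently γ_L(G_s) ≥ 2^{γ_M(G_s) − 2} − 1. -/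
open SimpleGraph

variable {V : Type*}

/-- the vertex set of the graph `G_s`: `none` is the vertex `p`,
`some (Sum.inl i)` is `a_i`, `some (Sum.inr (Sum.inl i))` is `b_i`, and
`some (Sum.inr (Sum.inr j))` is `c_j`. -/
abbrev GsV (s : ℕ) : Type :=
  Option (Fin (2 ^ (s + 1)) ⊕ (Fin (2 ^ (s + 1)) ⊕ Fin (s + 1)))

/-- the defining relation of the graph `G_s`: `p a_i` and `a_i b_i` for every `i`,
and `b_i c_j` whenever the binary representation of `i` has a 1 in position `j`. -/
def GsRel (s : ℕ) : GsV s → GsV s → Prop := fun x y =>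
  match x, y with
  | none, some (Sum.inl _) => True
  | some (Sum.inl i), some (Sum.inr (Sum.inl i')) => i = i'
  | some (Sum.inr (Sum.inl i)), some (Sum.inr (Sum.inr j)) =>
      Nat.testBit i.val j.val = true
  | _, _ => False

/-- the graph `G_s`. -/
def Gs (s : ℕ) : SimpleGraph (GsV s) := SimpleGraph.fromRel (GsRel s)



section AuxLip

variable {W : Type*} {G : SimpleGraph W}

private lemma walk_lip (f : W → ℕ) (hf : ∀ x y : W, G.Adj x y → f y ≤ f x + 1) :
    ∀ {u v : W} (w : G.Walk u v), f v ≤ f u + w.length := by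
  intro u v w
  induction w with
  | nil => simp
  | @cons u m v h p ih =>
      have := hf u m h
      simp only [SimpleGraph.Walk.length_cons]
      omega

private lemma dist_eq_of (f : W → ℕ) (hf : ∀ x y : W, G.Adj x y → f y ≤ f x + 1)
    {u v : W} (hu : f u = 0) (w : G.Walk u v) (hw : w.length = f v) :
    G.dist u v = f v := by
  have h1 : G.dist u v ≤ f v := hw ▸ SimpleGraph.dist_le w
  obtain ⟨w', hw'⟩ := w.reachable.exists_walk_length_eq_dist
  have h2 := walk_lip f hf w'
  omega

end AuxLip

section GsAux

variable {s : ℕ}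

private abbrev pV : GsV s := none
private abbrev aV (i : Fin (2 ^ (s + 1))) : GsV s := some (Sum.inl i)
private abbrev bV (i : Fin (2 ^ (s + 1))) : GsV s := some (Sum.inr (Sum.inl i))
private abbrev cV (j : Fin (s + 1)) : GsV s := some (Sum.inr (Sum.inr j))

private lemma adj_pa (i : Fin (2 ^ (s + 1))) : (Gs s).Adj pV (aV i) :=
  (SimpleGraph.fromRel_adj _ _ _).mpr ⟨by simp, Or.inl trivial⟩

private lemma adj_ab (i : Fin (2 ^ (s + 1))) : (Gs s).Adj (aV i) (bV i) :=
  (SimpleGraph.fromRel_adj _ _ _).mpr ⟨by simp, Or.inl rfl⟩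

private lemma adj_bc {i : Fin (2 ^ (s + 1))} {j : Fin (s + 1)}
    (h : Nat.testBit i.val j.val = true) : (Gs s).Adj (bV i) (cV j) :=
  (SimpleGraph.fromRel_adj _ _ _).mpr ⟨by simp, Or.inl h⟩

private lemma testBit_high {i : ℕ} (hi : i < 2 ^ (s + 1)) {j : ℕ} (hj : s + 1 ≤ j) :
    Nat.testBit i j = false :=
  Nat.testBit_eq_false_of_lt (lt_of_lt_of_le hi (Nat.pow_le_pow_right (by norm_num) hj))

private lemma exists_bit {i : ℕ} (hi : i < 2 ^ (s + 1)) (h0 : i ≠ 0) :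
    ∃ j : Fin (s + 1), Nat.testBit i j.val = true := by
  by_contra hc
  push_neg at hc
  apply h0
  apply Nat.eq_of_testBit_eq
  intro j
  rw [Nat.zero_testBit]
  rcases le_or_gt (s + 1) j with hj | hj
  · exact testBit_high hi hj
  · simpa using hc ⟨j, hj⟩

private lemma exists_diff_bit {i i' : ℕ} (hi : i < 2 ^ (s + 1)) (hi' : i' < 2 ^ (s + 1))
    (h : i ≠ i') : ∃ j : Fin (s + 1), Nat.testBit i j.val ≠ Nat.testBit i' j.val := by
  by_contra hc
  push_neg at hc
  apply h
  apply Nat.eq_of_testBit_eq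
  intro j
  rcases le_or_gt (s + 1) j with hj | hj
  · rw [testBit_high hi hj, testBit_high hi' hj]
  · exact hc ⟨j, hj⟩

/-- the index `2 ^ j`. -/
private def iP (j : Fin (s + 1)) : Fin (2 ^ (s + 1)) :=
  ⟨2 ^ j.val, Nat.pow_lt_pow_right (by norm_num) j.isLt⟩

private lemma testBit_iP (j : Fin (s + 1)) : Nat.testBit (iP (s := s) j).val j.val = true :=
  Nat.testBit_two_pow_self

/-- the index `2 ^ j ||| 2 ^ j'`. -/
private def iQ (j j' : Fin (s + 1)) : Fin (2 ^ (s + 1)) :=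
  ⟨2 ^ j.val ||| 2 ^ j'.val,
    Nat.or_lt_two_pow (Nat.pow_lt_pow_right (by norm_num) j.isLt)
      (Nat.pow_lt_pow_right (by norm_num) j'.isLt)⟩

private lemma testBit_iQ_left (j j' : Fin (s + 1)) :
    Nat.testBit (iQ (s := s) j j').val j.val = true := by
  show Nat.testBit (2 ^ j.val ||| 2 ^ j'.val) j.val = true
  rw [Nat.testBit_lor, Nat.testBit_two_pow_self]
  simp

private lemma testBit_iQ_right (j j' : Fin (s + 1)) :
    Nat.testBit (iQ (s := s) j j').val j'.val = true := by
  show Nat.testBit (2 ^ j.val ||| 2 ^ j'.val) j'.val = true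
  rw [Nat.testBit_lor, Nat.testBit_two_pow_self]
  simp


private def fP : GsV s → ℕ
  | none => 0
  | some (Sum.inl _) => 1
  | some (Sum.inr (Sum.inl _)) => 2
  | some (Sum.inr (Sum.inr _)) => 3

private def fB : GsV s → ℕ
  | none => 2
  | some (Sum.inl i) => if i.val = 0 then 1 else 3
  | some (Sum.inr (Sum.inl i)) => if i.val = 0 then 0 else 4
  | some (Sum.inr (Sum.inr _)) => 5

private def fC (j : Fin (s + 1)) : GsV s → ℕ
  | none => 3
  | some (Sum.inl i) => if Nat.testBit i.val j.val then 2 else 4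
  | some (Sum.inr (Sum.inl i)) =>
      if Nat.testBit i.val j.val then 1 else if i.val = 0 then 5 else 3
  | some (Sum.inr (Sum.inr j')) => if j' = j then 0 else 2

private lemma adj_elim {x y : GsV s} (h : (Gs s).Adj x y) : GsRel s x y ∨ GsRel s y x :=
  ((SimpleGraph.fromRel_adj _ _ _).mp h).2

private lemma lipP : ∀ x y : GsV s, (Gs s).Adj x y → fP y ≤ fP x + 1 := by
  intro x y h
  have h' := adj_elim h
  rcases x with _ | (i | (i | j)) <;> rcases y with _ | (i' | (i' | j')) <;>
    simp_all [GsRel, fP]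

private lemma lipB : ∀ x y : GsV s, (Gs s).Adj x y → fB y ≤ fB x + 1 := by
  intro x y h
  have h' := adj_elim h
  rcases x with _ | (i | (i | j)) <;> rcases y with _ | (i' | (i' | j')) <;>
    simp_all [GsRel, fB] <;> split_ifs <;> first | omega | simp_all

private lemma lipC (j : Fin (s + 1)) :
    ∀ x y : GsV s, (Gs s).Adj x y → fC j y ≤ fC j x + 1 := by
  intro x y h
  have h' := adj_elim h
  rcases x with _ | (i | (i | j1)) <;> rcases y with _ | (i' | (i' | j1')) <;>
    simp_all [GsRel, fC] <;> split_ifs <;> first | omega | simp_all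

private def i0 : Fin (2 ^ (s + 1)) := ⟨0, Nat.two_pow_pos _⟩

private def wPA (i : Fin (2 ^ (s + 1))) : (Gs s).Walk pV (aV i) := (adj_pa i).toWalk

private def wPB (i : Fin (2 ^ (s + 1))) : (Gs s).Walk pV (bV i) :=
  SimpleGraph.Walk.cons (adj_pa i) (adj_ab i).toWalk

private def wPC (j : Fin (s + 1)) : (Gs s).Walk pV (cV j) :=
  SimpleGraph.Walk.cons (adj_pa (iP j))
    (SimpleGraph.Walk.cons (adj_ab (iP j)) (adj_bc (testBit_iP j)).toWalk)

private def wBP : (Gs s).Walk (bV i0) pV :=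
  SimpleGraph.Walk.cons (adj_ab i0).symm (adj_pa i0).symm.toWalk

private def wCP (j : Fin (s + 1)) : (Gs s).Walk (cV j) pV :=
  SimpleGraph.Walk.cons (adj_bc (testBit_iP j)).symm
    (SimpleGraph.Walk.cons (adj_ab (iP j)).symm (adj_pa (iP j)).symm.toWalk)

private lemma distP (x : GsV s) : (Gs s).dist pV x = fP x := by
  rcases x with _ | (i | (i | j))
  · simp [fP]
  · exact dist_eq_of fP lipP rfl (wPA i) rfl
  · exact dist_eq_of fP lipP rfl (wPB i) rfl
  · exact dist_eq_of fP lipP rfl (wPC j) rfl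

private lemma distB (x : GsV s) : (Gs s).dist (bV i0) x = fB x := by
  have hu : fB (bV (s := s) i0) = 0 := by simp [fB, i0]
  rcases x with _ | (i | (i | j))
  · exact dist_eq_of fB lipB hu wBP rfl
  · by_cases h : i.val = 0
    · have : i = i0 := Fin.ext h
      subst this
      exact dist_eq_of fB lipB hu (adj_ab i0).symm.toWalk (by simp [fB, i0]; rfl)
    · refine dist_eq_of fB lipB hu (wBP.append (wPA i)) ?_
      simp [SimpleGraph.Walk.length_append, fB, if_neg h, wBP, wPA, (show i ≠ 0 from fun e => h (by simp [e]))]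
  · by_cases h : i.val = 0
    · have : i = i0 := Fin.ext h
      subst this
      rw [hu]
      exact SimpleGraph.dist_self
    · refine dist_eq_of fB lipB hu (wBP.append (wPB i)) ?_
      simp [SimpleGraph.Walk.length_append, fB, if_neg h, wBP, wPB, (show i ≠ 0 from fun e => h (by simp [e]))]
  · exact dist_eq_of fB lipB hu (wBP.append (wPC j)) (by
      simp [SimpleGraph.Walk.length_append, fB, wBP, wPC])

private lemma distC (j : Fin (s + 1)) (x : GsV s) : (Gs s).dist (cV j) x = fC j x := by
  have hu : fC (s := s) j (cV j) = 0 := by simp [fC]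
  rcases x with _ | (i | (i | j'))
  · exact dist_eq_of (fC j) (lipC j) hu (wCP j) rfl
  · by_cases hb : Nat.testBit i.val j.val = true
    · refine dist_eq_of (fC j) (lipC j) hu
        (SimpleGraph.Walk.cons (adj_bc hb).symm (adj_ab i).symm.toWalk) ?_
      simp [fC, hb]
    · refine dist_eq_of (fC j) (lipC j) hu ((wCP j).append (wPA i)) ?_
      simp [SimpleGraph.Walk.length_append, fC, hb, wCP, wPA]
  · by_cases hb : Nat.testBit i.val j.val = true
    · exact dist_eq_of (fC j) (lipC j) hu (adj_bc hb).symm.toWalk (by simp [fC, hb])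
    · by_cases h0 : i.val = 0
      · refine dist_eq_of (fC j) (lipC j) hu ((wCP j).append (wPB i)) ?_
        simp [SimpleGraph.Walk.length_append, fC, hb, h0, wCP, wPB]
      · obtain ⟨j2, hj2⟩ := exists_bit i.isLt h0
        refine dist_eq_of (fC j) (lipC j) hu
          (SimpleGraph.Walk.cons (adj_bc (testBit_iQ_left j j2)).symm
            (SimpleGraph.Walk.cons (adj_bc (testBit_iQ_right j j2)) (adj_bc hj2).symm.toWalk)) ?_
        simp [fC, hb, h0]
  · by_cases hj : j' = j
    · subst hj
      rw [hu]
      exact SimpleGraph.dist_self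
    · refine dist_eq_of (fC j) (lipC j) hu
        (SimpleGraph.Walk.cons (adj_bc (testBit_iQ_left j j')).symm
          (adj_bc (testBit_iQ_right j j')).toWalk) ?_
      simp [fC, hj]

private def S0 : Set (GsV s) := insert pV (insert (bV i0) (Set.range (cV (s := s))))

private lemma pV_mem : pV ∈ S0 (s := s) := Set.mem_insert _ _

private lemma bV_mem : bV i0 ∈ S0 (s := s) :=
  Set.mem_insert_of_mem _ (Set.mem_insert _ _)

private lemma cV_mem (j : Fin (s + 1)) : cV j ∈ S0 (s := s) :=
  Set.mem_insert_of_mem _ (Set.mem_insert_of_mem _ ⟨j, rfl⟩)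

private lemma S0_ncard : (S0 (s := s)).ncard = s + 3 := by
  have hc : (Set.range (cV (s := s))).ncard = s + 1 := by
    rw [← Set.image_univ, Set.ncard_image_of_injective _ (by intro a b hab; simpa using hab),
      Set.ncard_univ, Nat.card_eq_fintype_card, Fintype.card_fin]
  rw [S0, Set.ncard_insert_of_notMem (by simp), Set.ncard_insert_of_notMem (by simp), hc]

private lemma S0_dom : isDominatingSet (Gs s) (S0 (s := s)) := by
  intro x hx
  rcases x with _ | (i | (i | j))
  · exact absurd pV_mem hx
  · exact ⟨pV, pV_mem, adj_pa i⟩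
  · by_cases h0 : i.val = 0
    · have : i = i0 := Fin.ext h0
      subst this
      exact absurd bV_mem hx
    · obtain ⟨j, hj⟩ := exists_bit i.isLt h0
      exact ⟨cV j, cV_mem j, (adj_bc hj).symm⟩
  · exact absurd (cV_mem j) hx

private lemma S0_res : isResolvingSet (Gs s) (S0 (s := s)) := by
  intro x y hxy
  by_cases hp : fP x ≠ fP y
  · exact ⟨pV, pV_mem, by rw [distP, distP]; exact hp⟩
  push_neg at hp
  rcases x with _ | (i | (i | j)) <;> rcases y with _ | (i' | (i' | j')) <;>
    simp only [fP] at hp <;> try omega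
  · exact absurd rfl hxy
  · -- a_i vs a_i'
    have hii : i.val ≠ i'.val := fun h => hxy (by rw [Fin.ext h])
    obtain ⟨jd, hjd⟩ := exists_diff_bit i.isLt i'.isLt hii
    refine ⟨cV jd, cV_mem jd, ?_⟩
    rw [distC, distC]
    simp only [fC]
    rcases hb : Nat.testBit i.val jd.val <;> rcases hb' : Nat.testBit i'.val jd.val <;>
      simp_all
  · -- b_i vs b_i'
    have hii : i ≠ i' := fun h => hxy (by rw [h])
    have hii' : i.val ≠ i'.val := fun h => hii (Fin.ext h)
    rcases eq_or_ne i.val 0 with h0 | h0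
    · have : i = i0 := Fin.ext h0
      subst this
      refine ⟨bV i0, bV_mem, ?_⟩
      rw [distB, distB]
      have hz : i'.val ≠ 0 := fun h => hii' (by simp [i0, h])
      simp [fB, i0, hz]
    · rcases eq_or_ne i'.val 0 with h0' | h0'
      · have : i' = i0 := Fin.ext h0'
        subst this
        refine ⟨bV i0, bV_mem, ?_⟩
        rw [distB, distB]
        have hz : i.val ≠ 0 := fun h => hii' (by simp [i0, h])
        simp [fB, i0, hz]
      · obtain ⟨jd, hjd⟩ := exists_diff_bit i.isLt i'.isLt hii'
        refine ⟨cV jd, cV_mem jd, ?_⟩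
        rw [distC, distC]
        simp only [fC]
        rcases hb : Nat.testBit i.val jd.val <;> rcases hb' : Nat.testBit i'.val jd.val <;>
          simp_all [h0, h0']
  · -- c_j vs c_j'
    have hjj : j ≠ j' := fun h => hxy (by rw [h])
    refine ⟨cV j, cV_mem j, ?_⟩
    rw [distC, distC]
    simp [fC, hjj.symm]

private lemma mld_le : mldNum (Gs s) ≤ s + 3 :=
  Nat.sInf_le ⟨S0, ⟨S0_res, S0_dom⟩, S0_ncard⟩

private lemma adj_a_iff (i : Fin (2 ^ (s + 1))) (y : GsV s) :
    (Gs s).Adj (aV i) y ↔ y = pV ∨ y = bV i := by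
  constructor
  · intro h
    have h' := adj_elim h
    rcases y with _ | (i' | (i' | j')) <;> simp_all [GsRel]
  · rintro (rfl | rfl)
    · exact (adj_pa i).symm
    · exact adj_ab i

private lemma ld_lower (S : Set (GsV s)) (hS : isLDSet (Gs s) S) :
    2 ^ (s + 1) - 1 ≤ S.ncard := by
  classical
  set T : Set (Fin (2 ^ (s + 1))) := {i | aV i ∈ S ∨ bV i ∈ S} with hT
  -- the complement of T has at most one element
  have hTc : ∀ i ∈ Tᶜ, ∀ i' ∈ Tᶜ, i = i' := by
    intro i hi i' hi'
    by_contra hne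
    simp only [Set.mem_compl_iff, hT, Set.mem_setOf_eq, not_or] at hi hi'
    have key : (Gs s).neighborSet (aV i) ∩ S = (Gs s).neighborSet (aV i') ∩ S := by
      ext z
      simp only [Set.mem_inter_iff, SimpleGraph.mem_neighborSet, adj_a_iff]
      constructor
      · rintro ⟨rfl | rfl, hz⟩
        · exact ⟨Or.inl rfl, hz⟩
        · exact absurd hz hi.2
      · rintro ⟨rfl | rfl, hz⟩
        · exact ⟨Or.inl rfl, hz⟩
        · exact absurd hz hi'.2
    exact hS.2 (aV i) hi.1 (aV i') hi'.1 (by simp [hne]) key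
  have hTcard : 2 ^ (s + 1) - 1 ≤ T.ncard := by
    have h1 : Tᶜ.ncard ≤ 1 := (Set.ncard_le_one (Set.toFinite _)).mpr hTc
    have h2 : T.ncard + Tᶜ.ncard = 2 ^ (s + 1) := by
      rw [Set.ncard_add_ncard_compl, Nat.card_eq_fintype_card, Fintype.card_fin]
    omega
  -- inject T into S
  set g : Fin (2 ^ (s + 1)) → GsV s := fun i => if aV i ∈ S then aV i else bV i with hg
  have hsub : g '' T ⊆ S := by
    rintro _ ⟨i, hi, rfl⟩
    rcases hi with h | h
    · simpa [hg, h] using h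
    · by_cases ha : aV i ∈ S
      · simpa [hg, ha] using ha
      · simpa [hg, ha] using h
  have hinj : Set.InjOn g T := by
    intro i _ i' _ hgi
    simp only [hg] at hgi
    split_ifs at hgi <;> simp_all
  calc 2 ^ (s + 1) - 1 ≤ T.ncard := hTcard
    _ = (g '' T).ncard := (Set.ncard_image_of_injOn hinj).symm
    _ ≤ S.ncard := Set.ncard_le_ncard hsub (Set.toFinite _)

private lemma ld_ge : 2 ^ (s + 1) - 1 ≤ ldNum (Gs s) := by
  have hne : {n | ∃ S : Set (GsV s), isLDSet (Gs s) S ∧ S.ncard = n}.Nonempty := by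
    refine ⟨(Set.univ : Set (GsV s)).ncard, Set.univ, ⟨?_, ?_⟩, rfl⟩
    · intro x hx
      exact absurd (Set.mem_univ x) hx
    · intro x hx
      exact absurd (Set.mem_univ x) hx
  obtain ⟨S, hS, hcard⟩ := Nat.sInf_mem hne
  rw [ldNum, ← hcard]
  exact ld_lower S hS

end GsAux

theorem stmt12 (s : ℕ) (hs : 1 ≤ s) :
    mldNum (Gs s) ≤ s + 3 ∧
      2 ^ (s + 1) - 1 ≤ ldNum (Gs s) ∧
      2 ^ (mldNum (Gs s) - 2) - 1 ≤ ldNum (Gs s) := by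
  refine ⟨mld_le, ld_ge, ?_⟩
  have h1 : mldNum (Gs s) ≤ s + 3 := mld_le
  have h2 : 2 ^ (s + 1) - 1 ≤ ldNum (Gs s) := ld_ge
  have h3 : 2 ^ (mldNum (Gs s) - 2) ≤ 2 ^ (s + 1) :=
    Nat.pow_le_pow_right (by norm_num) (by omega)
  omega
end

section
/- There is no polynomial p with real coefficients such that γ_L(G) ≤ p(γ_M(G)) for every finite simple connected graph G of order at least 2; equivalently, for every polynomial p there exists a finite simple connected graph G with γ_L(G) > p(γ_M(G)). -/
open SimpleGraph

variable {V : Type*}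

namespace NPB
abbrev PSub (k : ℕ) := {z : Finset (Fin k) × Fin k // z.2 ∈ z.1}
inductive Vtx (k : ℕ) : Type
  | r : Vtx k
  | c : Vtx k
  | w (j : Fin k) : Vtx k
  | h (j : Fin k) : Vtx k
  | x (A : Finset (Fin k)) : Vtx k
  | p (z : PSub k) : Vtx k
  deriving DecidableEq, Fintype
open Vtx
def adjFun {k : ℕ} : Vtx k → Vtx k → Prop
  | .r, .w _ => True
  | .w j, .h j' => j = j'
  | .h j, .p z => z.1.2 = j
  | .p z, .x A => z.1.1 = A
  | .x _, .c => True
  | _, _ => False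
def Gr (k : ℕ) : SimpleGraph (Vtx k) := SimpleGraph.fromRel adjFun
variable {k : ℕ}
lemma adj_rw : (Gr k).Adj = fun u v => u ≠ v ∧ (adjFun u v ∨ adjFun v u) := by
  ext u v; exact SimpleGraph.fromRel_adj adjFun u v

lemma e_rw (j : Fin k) : (Gr k).Adj .r (.w j) := by simp [adj_rw, adjFun]
lemma e_wh (j : Fin k) : (Gr k).Adj (.w j) (.h j) := by simp [adj_rw, adjFun]
lemma e_hp (z : PSub k) : (Gr k).Adj (.h z.1.2) (.p z) := by simp [adj_rw, adjFun]
lemma e_px (z : PSub k) : (Gr k).Adj (.p z) (.x z.1.1) := by simp [adj_rw, adjFun]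
lemma e_xc (A : Finset (Fin k)) : (Gr k).Adj (.x A) .c := by simp [adj_rw, adjFun]

lemma adj_x_iff {A : Finset (Fin k)} {v : Vtx k} :
    (Gr k).Adj (.x A) v ↔ v = .c ∨ ∃ z : PSub k, z.1.1 = A ∧ v = .p z := by
  constructor
  · intro hadj
    cases v <;> simp [adj_rw, adjFun] at hadj ⊢
    · assumption
  · rintro (rfl | ⟨z, rfl, rfl⟩)
    · exact e_xc A
    · exact ((Gr k).adj_symm (e_px z))

def pot (m : Fin k) : Vtx k → ℤ
  | .r => 2
  | .c => 3
  | .w j => if j = m then 1 else 3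
  | .h j => if j = m then 0 else 4
  | .x A => if m ∈ A then 2 else 4
  | .p z => if z.1.2 = m then 1 else if m ∈ z.1.1 then 3 else 5

lemma pot_lip_aux (m : Fin k) (u v : Vtx k) (h : adjFun u v) :
    |pot m u - pot m v| ≤ 1 := by
  rcases u with _ | _ | j | j | A | z <;> rcases v with _ | _ | j' | j' | A' | z' <;>
      simp only [adjFun] at h
  -- (r, w)
  · simp only [pot]; split_ifs <;> norm_num
  -- (w, h)
  · subst h; simp only [pot]; split_ifs <;> simp_all <;> norm_num
  -- (h, p)
  · subst h; have hz := z'.2; simp only [pot]; split_ifs <;> simp_all <;> norm_num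
  -- (x, c)
  · simp only [pot]; split_ifs <;> norm_num
  -- (p, x)
  · subst h; have hz := z.2; simp only [pot]; split_ifs <;> simp_all <;> norm_num

lemma pot_lip (m : Fin k) {u v : Vtx k} (hadj : (Gr k).Adj u v) :
    |pot m u - pot m v| ≤ 1 := by
  rw [adj_rw] at hadj
  rcases hadj.2 with h | h
  · exact pot_lip_aux m u v h
  · rw [abs_sub_comm]; exact pot_lip_aux m v u h

lemma pot_walk_bound (φ : Vtx k → ℤ) (lip : ∀ u v, (Gr k).Adj u v → |φ u - φ v| ≤ 1)
    {u v : Vtx k} (W : (Gr k).Walk u v) : |φ u - φ v| ≤ (W.length : ℤ) := by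
  induction W with
  | nil => simp
  | cons hadj W ih =>
      rename_i a b d
      have h1 := lip _ _ hadj
      simp only [SimpleGraph.Walk.length_cons]
      push_cast
      have habs : |φ a - φ d| ≤ |φ a - φ b| + |φ b - φ d| := abs_sub_le _ _ _
      omega

lemma pot_dist_bound (φ : Vtx k → ℤ) (lip : ∀ u v, (Gr k).Adj u v → |φ u - φ v| ≤ 1)
    {u v : Vtx k} (hr : (Gr k).Reachable u v) : |φ u - φ v| ≤ ((Gr k).dist u v : ℤ) := by
  obtain ⟨W, hW⟩ := hr.exists_walk_length_eq_dist
  simpa [hW] using pot_walk_bound φ lip W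


-- helper subtype elements
def zS (m : Fin k) : PSub k := ⟨({m}, m), by simp⟩
def zIn {A : Finset (Fin k)} {m : Fin k} (hm : m ∈ A) : PSub k := ⟨(A, m), hm⟩

lemma pot_nonneg (m : Fin k) (v : Vtx k) : 0 ≤ pot m v := by
  rcases v <;> simp only [pot]
  all_goals try split_ifs
  all_goals norm_num

lemma dist_h_aux (m : Fin k) {v : Vtx k} (W : (Gr k).Walk (Vtx.h m) v)
    (hlen : (W.length : ℤ) = pot m v) : ((Gr k).dist (Vtx.h m) v : ℤ) = pot m v := by
  have low := pot_dist_bound (pot m) (fun u v h => pot_lip m h) W.reachable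
  have h0 : pot m (Vtx.h m) = 0 := by simp [pot]
  rw [h0, zero_sub, abs_neg] at low
  have up : ((Gr k).dist (Vtx.h m) v : ℤ) ≤ pot m v := by
    rw [← hlen]; exact_mod_cast SimpleGraph.dist_le W
  exact le_antisymm up (le_trans (le_abs_self _) low)

open SimpleGraph.Walk in
lemma dist_h (m : Fin k) (v : Vtx k) : ((Gr k).dist (Vtx.h m) v : ℤ) = pot m v := by
  rcases v with _ | _ | j | j | A | z
  · -- r
    refine dist_h_aux m (cons (e_wh m).symm (cons (e_rw m).symm nil)) ?_
    simp [pot]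
  · -- c
    refine dist_h_aux m (cons (e_hp (zS m)) (cons (e_px (zS m)) (cons (e_xc _) nil))) ?_
    simp [pot]; rfl
  · -- w j
    by_cases hj : j = m
    · subst hj
      refine dist_h_aux _ (cons (e_wh _).symm nil) ?_
      simp [pot]
    · refine dist_h_aux m (cons (e_wh m).symm (cons (e_rw m).symm (cons (e_rw j) nil))) ?_
      simp [pot, hj]
  · -- h j
    by_cases hj : j = m
    · subst hj
      refine dist_h_aux _ nil ?_
      simp [pot]
    · have hmA : m ∈ ({m, j} : Finset (Fin k)) := by simp
      have hjA : j ∈ ({m, j} : Finset (Fin k)) := by simp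
      refine dist_h_aux m (cons (e_hp (zIn hmA)) (cons (e_px (zIn hmA))
        (cons ((e_px (zIn hjA)).symm) (cons ((e_hp (zIn hjA)).symm) nil)))) ?_
      simp [pot, hj]; rfl
  · -- x A
    by_cases hm : m ∈ A
    · refine dist_h_aux m (cons (e_hp (zIn hm)) (cons (e_px (zIn hm)) nil)) ?_
      simp [pot, hm]; rfl
    · refine dist_h_aux m (cons (e_hp (zS m)) (cons (e_px (zS m))
        (cons (e_xc _) (cons ((e_xc A).symm) nil)))) ?_
      simp [pot, hm]; rfl
  · -- p z
    by_cases hz : z.1.2 = m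
    · subst hz
      refine dist_h_aux _ (cons (e_hp z) nil) ?_
      simp [pot]
    · by_cases hm : m ∈ z.1.1
      · refine dist_h_aux m (cons (e_hp (zIn hm)) (cons (e_px (zIn hm))
          (cons ((e_px z).symm) nil))) ?_
        simp [pot, hz, hm]; rfl
      · refine dist_h_aux m (cons (e_hp (zS m)) (cons (e_px (zS m))
          (cons (e_xc _) (cons ((e_xc z.1.1).symm) (cons ((e_px z).symm) nil))))) ?_
        simp [pot, hz, hm]; rfl


-- connectivity
lemma reach_r (hk : 0 < k) (v : Vtx k) : (Gr k).Reachable v .r := by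
  have j0 : Fin k := ⟨0, hk⟩
  have hcr : (Gr k).Reachable .c (.r : Vtx k) :=
    ((e_xc {j0}).symm.reachable).trans (((e_px (zS j0)).symm.reachable).trans
      (((e_hp (zS j0)).symm.reachable).trans (((e_wh j0).symm.reachable).trans
        ((e_rw j0).symm.reachable))))
  rcases v with _ | _ | j | j | A | z
  · rfl
  · exact hcr
  · exact (e_rw j).symm.reachable
  · exact ((e_wh j).symm.reachable).trans (e_rw j).symm.reachable
  · exact ((e_xc A).reachable).trans hcr
  · exact ((e_hp z).symm.reachable).trans
      (((e_wh z.1.2).symm.reachable).trans (e_rw z.1.2).symm.reachable)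

lemma conn (hk : 0 < k) : (Gr k).Connected := by
  rw [SimpleGraph.connected_iff]
  exact ⟨fun u v => (reach_r hk u).trans (reach_r hk v).symm, ⟨.r⟩⟩

-- the MLD set
def Sstar (k : ℕ) : Set (Vtx k) := insert .r (insert .c (Set.range Vtx.h))

lemma hub_mem (m : Fin k) : (Vtx.h m) ∈ Sstar k := by
  simp [Sstar]

lemma zero_trick (hk : 0 < k) {v v' : Vtx k} (hv : v ∈ Sstar k) (hne : v ≠ v') :
    ∃ u ∈ Sstar k, (Gr k).dist u v ≠ (Gr k).dist u v' := by
  refine ⟨v, hv, ?_⟩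
  rw [SimpleGraph.dist_self]
  exact fun h0 => hne ((conn hk).dist_eq_zero_iff.mp h0.symm)

lemma hub_trick {v v' : Vtx k} (m : Fin k) (hne : pot m v ≠ pot m v') :
    ∃ u ∈ Sstar k, (Gr k).dist u v ≠ (Gr k).dist u v' := by
  refine ⟨.h m, hub_mem m, fun heq => hne ?_⟩
  rw [← dist_h, ← dist_h, heq]

lemma dist_r_w (j : Fin k) : (Gr k).dist .r (.w j) = 1 :=
  SimpleGraph.dist_eq_one_iff_adj.mpr (e_rw j)

lemma dist_r_p (z : PSub k) : (Gr k).dist .r (.p z) ≠ 1 := by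
  intro h1
  have := SimpleGraph.dist_eq_one_iff_adj.mp h1
  simp [adj_rw, adjFun] at this

lemma flip_res {v v' : Vtx k} (hres : ∃ u ∈ Sstar k, (Gr k).dist u v' ≠ (Gr k).dist u v) :
    ∃ u ∈ Sstar k, (Gr k).dist u v ≠ (Gr k).dist u v' := by
  obtain ⟨u, hu, hne⟩ := hres; exact ⟨u, hu, hne.symm⟩

lemma symmdiff_exists {A B : Finset (Fin k)} (hne : A ≠ B) :
    ∃ m, (m ∈ A ∧ m ∉ B) ∨ (m ∈ B ∧ m ∉ A) := by
  by_contra hcon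
  push_neg at hcon
  exact hne (Finset.ext fun m => by have := hcon m; tauto)

-- core case analysis for pairs among w/x/p
lemma resolve_wx (j : Fin k) (A : Finset (Fin k)) :
    ∃ u ∈ Sstar k, (Gr k).dist u (.w j) ≠ (Gr k).dist u (.x A) := by
  refine hub_trick j ?_
  simp only [pot, if_pos rfl]
  split_ifs <;> norm_num

lemma resolve_wp (j : Fin k) (z : PSub k) :
    ∃ u ∈ Sstar k, (Gr k).dist u (.w j) ≠ (Gr k).dist u (.p z) := by
  by_cases hB : z.1.1 = Finset.univ
  · refine ⟨.r, by simp [Sstar], ?_⟩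
    rw [dist_r_w]
    exact fun h => dist_r_p z h.symm
  · obtain ⟨m, hm⟩ : ∃ m, m ∉ z.1.1 := by
      by_contra hcon; push_neg at hcon
      exact hB (Finset.eq_univ_iff_forall.mpr hcon)
    refine hub_trick m ?_
    have hmz : z.1.2 ≠ m := fun he => hm (he ▸ z.2)
    simp only [pot, if_neg hmz, if_neg hm]
    split_ifs <;> norm_num

lemma resolve_xp (A : Finset (Fin k)) (z : PSub k) :
    ∃ u ∈ Sstar k, (Gr k).dist u (.x A) ≠ (Gr k).dist u (.p z) := by
  refine hub_trick z.1.2 ?_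
  simp only [pot, if_pos rfl]
  split_ifs <;> norm_num

lemma resolving (hk : 0 < k) : isResolvingSet (Gr k) (Sstar k) := by
  intro v v' hne
  by_cases hv : v ∈ Sstar k
  · exact zero_trick hk hv hne
  by_cases hv' : v' ∈ Sstar k
  · exact flip_res (zero_trick hk hv' hne.symm)
  rcases v with _ | _ | j | j | A | z
  · exact absurd (by simp [Sstar]) hv
  · exact absurd (by simp [Sstar]) hv
  · -- v = w j
    rcases v' with _ | _ | j' | j' | A' | z'
    · exact absurd (by simp [Sstar]) hv'
    · exact absurd (by simp [Sstar]) hv'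
    · -- w w
      have hjj : j ≠ j' := fun he => hne (by rw [he])
      refine hub_trick j ?_
      simp only [pot, if_pos rfl, if_neg (Ne.symm hjj)]
      norm_num
    · exact absurd (hub_mem j') hv'
    · exact resolve_wx j A'
    · exact resolve_wp j z'
  · exact absurd (hub_mem j) hv
  · -- v = x A
    rcases v' with _ | _ | j' | j' | A' | z'
    · exact absurd (by simp [Sstar]) hv'
    · exact absurd (by simp [Sstar]) hv'
    · exact flip_res (resolve_wx j' A)
    · exact absurd (hub_mem j') hv'
    · -- x x
      have hAA : A ≠ A' := fun he => hne (by rw [he])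
      obtain ⟨m, hm⟩ := symmdiff_exists hAA
      refine hub_trick m ?_
      rcases hm with ⟨h1, h2⟩ | ⟨h1, h2⟩ <;> simp only [pot, if_pos h1, if_neg h2] <;> norm_num
    · exact resolve_xp A z'
  · -- v = p z
    rcases v' with _ | _ | j' | j' | A' | z'
    · exact absurd (by simp [Sstar]) hv'
    · exact absurd (by simp [Sstar]) hv'
    · exact flip_res (resolve_wp j' z)
    · exact absurd (hub_mem j') hv'
    · exact flip_res (resolve_xp A' z)
    · -- p p
      by_cases hii : z.1.2 = z'.1.2
      · have hBB : z.1.1 ≠ z'.1.1 := by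
          intro he
          exact hne (by
            congr 1
            exact Subtype.ext (Prod.ext he hii))
        obtain ⟨m, hm⟩ := symmdiff_exists hBB
        have hmi : z.1.2 ≠ m := by
          rintro rfl
          rcases hm with ⟨h1, h2⟩ | ⟨h1, h2⟩
          · exact h2 (hii ▸ z'.2)
          · exact h2 z.2
        have hmi' : z'.1.2 ≠ m := hii ▸ hmi
        refine hub_trick m ?_
        rcases hm with ⟨h1, h2⟩ | ⟨h1, h2⟩ <;>
          simp only [pot, if_neg hmi, if_neg hmi', if_pos h1, if_neg h2] <;> norm_num
      · refine hub_trick z.1.2 ?_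
        have hne2 : z'.1.2 ≠ z.1.2 := fun he => hii he.symm
        simp only [pot, if_pos rfl, if_neg hne2]
        split_ifs <;> norm_num

lemma dominating : isDominatingSet (Gr k) (Sstar k) := by
  intro v hv
  rcases v with _ | _ | j | j | A | z
  · exact absurd (by simp [Sstar]) hv
  · exact absurd (by simp [Sstar]) hv
  · exact ⟨.r, by simp [Sstar], e_rw j⟩
  · exact absurd (hub_mem j) hv
  · exact ⟨.c, by simp [Sstar], (e_xc A).symm⟩
  · exact ⟨.h z.1.2, hub_mem _, e_hp z⟩

lemma Sstar_ncard : (Sstar k).ncard ≤ k + 2 := by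
  have h1 : (Set.range (Vtx.h : Fin k → Vtx k)).ncard = k := by
    rw [← Set.image_univ, Set.ncard_image_of_injective _ (fun a b hab => by
      cases hab; rfl)]
    rw [Set.ncard_univ]
    simp
  calc (Sstar k).ncard ≤ (insert Vtx.c (Set.range Vtx.h)).ncard + 1 := Set.ncard_insert_le _ _
    _ ≤ (Set.range (Vtx.h : Fin k → Vtx k)).ncard + 1 + 1 := by
        have := Set.ncard_insert_le Vtx.c (Set.range (Vtx.h : Fin k → Vtx k))
        omega
    _ ≤ k + 2 := by omega


open Classical in
lemma ld_lower (S : Set (Vtx k)) (hLD : isLDSet (Gr k) S) : 2 ^ k ≤ S.ncard + 1 := by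
  classical
  set Free : Set (Finset (Fin k)) :=
    {A | Vtx.x A ∉ S ∧ ∀ z : PSub k, z.1.1 = A → Vtx.p z ∉ S} with hFree
  -- Free is a subsingleton
  have hsub : Free.Subsingleton := by
    intro A hA B hB
    by_contra hAB
    have hxne : (Vtx.x A : Vtx k) ≠ Vtx.x B := fun he => hAB (by cases he; rfl)
    have hkey := hLD.2 (Vtx.x A) hA.1 (Vtx.x B) hB.1 hxne
    apply hkey
    have hNA : (Gr k).neighborSet (Vtx.x A) ∩ S = {Vtx.c} ∩ S := by
      ext u
      simp only [SimpleGraph.mem_neighborSet, Set.mem_inter_iff, Set.mem_singleton_iff]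
      constructor
      · rintro ⟨hadj, huS⟩
        rcases adj_x_iff.mp hadj with rfl | ⟨z, hz, rfl⟩
        · exact ⟨rfl, huS⟩
        · exact absurd huS (hA.2 z hz)
      · rintro ⟨rfl, huS⟩
        exact ⟨e_xc A, huS⟩
    have hNB : (Gr k).neighborSet (Vtx.x B) ∩ S = {Vtx.c} ∩ S := by
      ext u
      simp only [SimpleGraph.mem_neighborSet, Set.mem_inter_iff, Set.mem_singleton_iff]
      constructor
      · rintro ⟨hadj, huS⟩
        rcases adj_x_iff.mp hadj with rfl | ⟨z, hz, rfl⟩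
        · exact ⟨rfl, huS⟩
        · exact absurd huS (hB.2 z hz)
      · rintro ⟨rfl, huS⟩
        exact ⟨e_xc B, huS⟩
    rw [hNA, hNB]
  have hFree1 : Free.ncard ≤ 1 := (Set.ncard_le_one (Set.toFinite _)).mpr
    (fun a ha b hb => hsub ha hb)
  set NF : Set (Finset (Fin k)) := Set.univ \ Free with hNF
  have hNFcard : 2 ^ k ≤ NF.ncard + 1 := by
    have huniv : (Set.univ : Set (Finset (Fin k))).ncard = 2 ^ k := by
      rw [Set.ncard_univ, Nat.card_eq_fintype_card, Fintype.card_finset, Fintype.card_fin]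
    have hsplit : (Set.univ : Set (Finset (Fin k))) = NF ∪ Free := by
      rw [hNF]; simp [Set.diff_union_self]
    have := Set.ncard_union_le NF Free
    rw [← hsplit, huniv] at this
    omega
  -- injection from NF into S
  have hinj : NF.ncard ≤ S.ncard := by
    set f : Finset (Fin k) → Vtx k := fun A =>
      if Vtx.x A ∈ S then Vtx.x A
      else if hz : ∃ z : PSub k, z.1.1 = A ∧ Vtx.p z ∈ S then Vtx.p hz.choose
      else Vtx.r with hf
    have hmaps : ∀ A ∈ NF, f A ∈ S := by
      intro A hA
      have hnot : ¬ (Vtx.x A ∉ S ∧ ∀ z : PSub k, z.1.1 = A → Vtx.p z ∉ S) := hA.2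
      rw [hf]
      by_cases hxa : Vtx.x A ∈ S
      · simpa [hxa] using hxa
      · push_neg at hnot
        obtain ⟨z, hz1, hz2⟩ := hnot hxa
        have hex : ∃ z : PSub k, z.1.1 = A ∧ Vtx.p z ∈ S := ⟨z, hz1, hz2⟩
        simp only [if_neg hxa, dif_pos hex]
        exact hex.choose_spec.2
    have hproj : ∀ A ∈ NF, (fun v : Vtx k => match v with
        | .x B => B | .p z => z.1.1 | _ => (∅ : Finset (Fin k))) (f A) = A := by
      intro A hA
      rw [hf]
      by_cases hxa : Vtx.x A ∈ S
      · simp [hxa]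
      · have hnot : ¬ (Vtx.x A ∉ S ∧ ∀ z : PSub k, z.1.1 = A → Vtx.p z ∉ S) := hA.2
        push_neg at hnot
        obtain ⟨z, hz1, hz2⟩ := hnot hxa
        have hex : ∃ z : PSub k, z.1.1 = A ∧ Vtx.p z ∈ S := ⟨z, hz1, hz2⟩
        simp only [if_neg hxa, dif_pos hex]
        exact hex.choose_spec.1
    refine Set.ncard_le_ncard_of_injOn f hmaps ?_ (Set.toFinite _)
    intro a ha b hb hab
    have := hproj a ha
    rw [hab, hproj b hb] at this
    exact this.symm
  omega


section Transfer

variable {V W : Type*} {G : SimpleGraph V} {H : SimpleGraph W}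

lemma iso_dist (φ : G ≃g H) (u v : V) : H.dist (φ u) (φ v) = G.dist u v := by
  by_cases hr : G.Reachable u v
  · apply le_antisymm
    · obtain ⟨Wx, hWx⟩ := hr.exists_walk_length_eq_dist
      calc H.dist (φ u) (φ v) ≤ (Wx.map φ.toHom).length := SimpleGraph.dist_le _
        _ = G.dist u v := by rw [SimpleGraph.Walk.length_map, hWx]
    · have hr' : H.Reachable (φ u) (φ v) := hr.map φ.toHom
      obtain ⟨Wx, hWx⟩ := hr'.exists_walk_length_eq_dist
      calc G.dist u v ≤ ((Wx.map φ.symm.toHom).copy (by simp) (by simp)).length :=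
            SimpleGraph.dist_le _
        _ = H.dist (φ u) (φ v) := by
            rw [SimpleGraph.Walk.length_copy, SimpleGraph.Walk.length_map, hWx]
  · have hr' : ¬ H.Reachable (φ u) (φ v) := by
      intro hcon
      exact hr (by simpa using hcon.map φ.symm.toHom)
    rw [SimpleGraph.dist_eq_zero_iff_eq_or_not_reachable.mpr (Or.inr hr),
      SimpleGraph.dist_eq_zero_iff_eq_or_not_reachable.mpr (Or.inr hr')]

lemma iso_neigh (φ : G ≃g H) (v : V) (S : Set V) :
    H.neighborSet (φ v) ∩ (φ '' S) = φ '' (G.neighborSet v ∩ S) := by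
  ext u
  constructor
  · rintro ⟨hadj, ⟨a, haS, rfl⟩⟩
    exact ⟨a, ⟨φ.map_adj_iff.mp hadj, haS⟩, rfl⟩
  · rintro ⟨a, ⟨hadj, haS⟩, rfl⟩
    exact ⟨φ.map_adj_iff.mpr hadj, ⟨a, haS, rfl⟩⟩

lemma iso_mld (φ : G ≃g H) (S : Set V) (hS : isMLDSet G S) : isMLDSet H (φ '' S) := by
  constructor
  · intro a b hab
    obtain ⟨u, huS, hu⟩ := hS.1 (φ.symm a) (φ.symm b)
      (fun he => hab (by simpa using congrArg φ he))
    refine ⟨φ u, ⟨u, huS, rfl⟩, ?_⟩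
    have h1 := iso_dist φ u (φ.symm a)
    have h2 := iso_dist φ u (φ.symm b)
    simp only [RelIso.apply_symm_apply] at h1 h2
    rw [h1, h2]; exact hu
  · intro a ha
    have : φ.symm a ∉ S := fun hc => ha ⟨φ.symm a, hc, by simp⟩
    obtain ⟨u, huS, hadj⟩ := hS.2 (φ.symm a) this
    refine ⟨φ u, ⟨u, huS, rfl⟩, ?_⟩
    have := φ.map_adj_iff.mpr hadj
    simpa using this

lemma iso_ld (φ : G ≃g H) (S : Set V) (hS : isLDSet G S) : isLDSet H (φ '' S) := by
  constructor
  · intro a ha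
    have : φ.symm a ∉ S := fun hc => ha ⟨φ.symm a, hc, by simp⟩
    obtain ⟨u, huS, hadj⟩ := hS.1 (φ.symm a) this
    refine ⟨φ u, ⟨u, huS, rfl⟩, ?_⟩
    have := φ.map_adj_iff.mpr hadj
    simpa using this
  · intro a ha b hb hab
    have ha' : φ.symm a ∉ S := fun hc => ha ⟨φ.symm a, hc, by simp⟩
    have hb' : φ.symm b ∉ S := fun hc => hb ⟨φ.symm b, hc, by simp⟩
    have hne := hS.2 (φ.symm a) ha' (φ.symm b) hb'
      (fun he => hab (by simpa using congrArg φ he))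
    intro hcon
    apply hne
    have h1 := iso_neigh φ (φ.symm a) S
    have h2 := iso_neigh φ (φ.symm b) S
    simp only [RelIso.apply_symm_apply] at h1 h2
    rw [h1, h2] at hcon
    exact (Set.image_eq_image φ.toEquiv.injective).mp hcon

end Transfer


section FinGraph

variable (k : ℕ)

noncomputable def nn : ℕ := Fintype.card (Vtx k)

noncomputable def eqv : Fin (nn k) ≃ Vtx k := (Fintype.equivFin (Vtx k)).symm

noncomputable def Gfin : SimpleGraph (Fin (nn k)) := (Gr k).comap (eqv k).toEmbedding

noncomputable def isoG : Gfin k ≃g Gr k := SimpleGraph.Iso.comap (eqv k) (Gr k)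

lemma nn_ge : 2 ≤ nn k := by
  have : Nontrivial (Vtx k) := ⟨⟨.r, .c, by simp⟩⟩
  exact Fintype.one_lt_card

lemma Gfin_conn (hk : 0 < k) : (Gfin k).Connected :=
  ((isoG k).connected_iff).mpr (conn hk)

lemma mld_upper (hk : 0 < k) : mldNum (Gfin k) ≤ k + 2 := by
  have hmem : ((isoG k).symm '' Sstar k).ncard ∈
      {n | ∃ S : Set (Fin (nn k)), isMLDSet (Gfin k) S ∧ S.ncard = n} :=
    ⟨(isoG k).symm '' Sstar k, iso_mld (isoG k).symm _ ⟨resolving hk, dominating⟩, rfl⟩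
  have h1 := Nat.sInf_le hmem
  have h2 : ((isoG k).symm '' Sstar k).ncard = (Sstar k).ncard :=
    Set.ncard_image_of_injective _ (isoG k).symm.toEquiv.injective
  calc mldNum (Gfin k) ≤ _ := h1
    _ ≤ k + 2 := by rw [h2]; exact Sstar_ncard

lemma ld_lower_fin : 2 ^ k ≤ ldNum (Gfin k) + 1 := by
  have hne : {n | ∃ S : Set (Fin (nn k)), isLDSet (Gfin k) S ∧ S.ncard = n}.Nonempty := by
    refine ⟨(Set.univ : Set (Fin (nn k))).ncard, Set.univ, ⟨?_, ?_⟩, rfl⟩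
    · intro v hv; exact absurd (Set.mem_univ v) hv
    · intro v hv; exact absurd (Set.mem_univ v) hv
  obtain ⟨S', hS', hcard⟩ := Nat.sInf_mem hne
  have hLD : isLDSet (Gr k) ((isoG k) '' S') := iso_ld (isoG k) S' hS'
  have := ld_lower _ hLD
  have hinj : Function.Injective (isoG k) := (isoG k).toEquiv.injective
  rw [Set.ncard_image_of_injective _ hinj, hcard] at this
  exact this

end FinGraph

-- numeric choice of k
lemma choose_k (p : Polynomial ℝ) :
    ∃ k : ℕ, 0 < k ∧ ∀ t : ℕ, t ≤ k + 2 → p.eval (t : ℝ) < (2 : ℝ) ^ k - 1 := by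
  set D := p.natDegree with hD
  set C := ∑ i ∈ Finset.range (D + 1), |p.coeff i| with hC
  have hC0 : 0 ≤ C := Finset.sum_nonneg fun i _ => abs_nonneg _
  -- find k
  have htend := tendsto_pow_const_div_const_pow_of_one_lt D (by norm_num : (1:ℝ) < 2)
  have heps : (0:ℝ) < 1 / (2 ^ D * (C + 2)) := by positivity
  have hev := htend.eventually_lt_const heps
  obtain ⟨k, hklt, hk2⟩ := (hev.and (Filter.eventually_ge_atTop 2)).exists
  refine ⟨k, by omega, ?_⟩
  have hkR : (2:ℝ) ≤ (k:ℝ) := by exact_mod_cast hk2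
  -- main chain : C * (k+2)^D + 2 ≤ 2^k
  have hpow : ((k:ℝ) + 2) ^ D ≤ 2 ^ D * (k:ℝ) ^ D := by
    rw [← mul_pow]
    exact pow_le_pow_left₀ (by linarith) (by linarith) D
  have hkey : (C + 2) * (2 ^ D * (k:ℝ) ^ D) < 2 ^ k := by
    have h2k : (0:ℝ) < 2 ^ k := by positivity
    rw [div_lt_iff₀ h2k] at hklt
    calc (C + 2) * (2 ^ D * (k:ℝ) ^ D) = (2 ^ D * (C + 2)) * (k:ℝ) ^ D := by ring
      _ < (2 ^ D * (C + 2)) * (1 / (2 ^ D * (C + 2)) * 2 ^ k) := by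
          apply mul_lt_mul_of_pos_left hklt (by positivity)
      _ = 2 ^ k := by field_simp
  have hchain : C * ((k:ℝ) + 2) ^ D + 2 ≤ 2 ^ k := by
    have h1 : (1:ℝ) ≤ ((k:ℝ) + 2) ^ D := one_le_pow₀ (by linarith : (1:ℝ) ≤ (k:ℝ) + 2)
    nlinarith [mul_le_mul_of_nonneg_left hpow hC0,
      mul_le_mul_of_nonneg_left hpow (by linarith : (0:ℝ) ≤ C + 2)]
  intro t ht
  have htR : (t : ℝ) ≤ (k:ℝ) + 2 := by exact_mod_cast ht
  have ht0 : (0:ℝ) ≤ t := Nat.cast_nonneg t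
  have heval : p.eval (t:ℝ) ≤ C * ((k:ℝ) + 2) ^ D := by
    rw [Polynomial.eval_eq_sum_range, ← hD]
    calc ∑ i ∈ Finset.range (D + 1), p.coeff i * (t:ℝ) ^ i
        ≤ ∑ i ∈ Finset.range (D + 1), |p.coeff i| * ((k:ℝ) + 2) ^ D := by
          apply Finset.sum_le_sum
          intro i hi
          have hpow1 : (t:ℝ) ^ i ≤ ((k:ℝ) + 2) ^ i := pow_le_pow_left₀ ht0 htR i
          have hpow2 : ((k:ℝ) + 2) ^ i ≤ ((k:ℝ) + 2) ^ D := by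
            apply pow_le_pow_right₀ (by linarith)
            exact Nat.lt_succ_iff.mp (Finset.mem_range.mp hi)
          calc p.coeff i * (t:ℝ) ^ i ≤ |p.coeff i| * (t:ℝ) ^ i :=
                mul_le_mul_of_nonneg_right (le_abs_self _) (by positivity)
            _ ≤ |p.coeff i| * ((k:ℝ) + 2) ^ D := by
                apply mul_le_mul_of_nonneg_left _ (abs_nonneg _)
                exact le_trans hpow1 hpow2
      _ = C * ((k:ℝ) + 2) ^ D := by rw [hC, Finset.sum_mul]
  linarith

end NPB

theorem stmt13 (p : Polynomial ℝ) :
    ∃ (n : ℕ) (G : SimpleGraph (Fin n)), 2 ≤ n ∧ G.Connected ∧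
      p.eval ((mldNum G : ℝ)) < (ldNum G : ℝ) := by
  obtain ⟨k, hk, hbound⟩ := NPB.choose_k p
  refine ⟨NPB.nn k, NPB.Gfin k, NPB.nn_ge k, NPB.Gfin_conn k hk, ?_⟩
  have hmld := NPB.mld_upper k hk
  have hld := NPB.ld_lower_fin k
  have h1 : p.eval ((mldNum (NPB.Gfin k) : ℝ)) < (2:ℝ)^k - 1 := hbound _ hmld
  have h2 : (2:ℝ)^k - 1 ≤ (ldNum (NPB.Gfin k) : ℝ) := by
    have hcast : ((2^k : ℕ) : ℝ) ≤ ((ldNum (NPB.Gfin k) + 1 : ℕ) : ℝ) := Nat.cast_le.mpr hld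
    push_cast at hcast
    linarith
  linarith
end

section
/- Let G be a finite simple connected graph of order at least 2 and let S be an MLD-set of G. Then every pair of distinct vertices x, y ∈ V(G) \ S is doubly resolved by S, i.e., there exist u, v ∈ S with d(u,x) − d(u,y) ≠ d(v,x) − d(v,y). -/
open SimpleGraph

variable {V : Type*}

theorem stmt14 {V : Type*} [Fintype V] (G : SimpleGraph V)
    (hconn : G.Connected) (hcard : 2 ≤ Fintype.card V)
    (S : Set V) (hS : isMLDSet G S) :
    ∀ x y : V, x ∉ S → y ∉ S → x ≠ y → setDoublyResolves G S x y := by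
  intro x y hx hy hxy
  by_contra h
  simp only [setDoublyResolves, doublyResolves, not_exists, not_and, not_ne_iff] at h
  obtain ⟨u, hu, hres⟩ := hS.1 x y hxy
  obtain ⟨v, hv, hvx⟩ := hS.2 x hx
  obtain ⟨w, hw, hwy⟩ := hS.2 y hy
  have hvx1 : G.dist v x = 1 := dist_eq_one_iff_adj.2 hvx
  have hwy1 : G.dist w y = 1 := dist_eq_one_iff_adj.2 hwy
  have hvy : G.dist v y ≠ 0 := by
    rw [Ne, hconn.dist_eq_zero_iff]
    rintro rfl; exact hy hv
  have hwx : G.dist w x ≠ 0 := by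
    rw [Ne, hconn.dist_eq_zero_iff]
    rintro rfl; exact hx hw
  have h1 := h u hu v hv
  have h2 := h u hu w hw
  rw [hvx1] at h1
  rw [hwy1] at h2
  exact hres (by omega)
end

section
/- Let S be an MLD-set of a finite simple connected graph G of order at least 2, and let u ∈ S and x ∈ V(G) \ S be such that the pair {u,x} is not doubly resolved by S. Then N(x) ∩ S = {u}; furthermore, x is the only vertex of V(G) \ S such that {u,x} is not doubly resolved by S. -/
open SimpleGraph

variable {V : Type*}

theorem helper {V : Type*} (G : SimpleGraph V) (hconn : G.Connected)
    (S : Set V) (hS : (∀ x : V, x ∉ S → ∃ u ∈ S, G.Adj u x))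
    (u : V) (hu : u ∈ S) (x : V) (hx : x ∉ S)
    (hnd : ¬ ∃ v ∈ S, ∃ w ∈ S,
      (G.dist v u : ℤ) - (G.dist v x : ℤ) ≠ (G.dist w u : ℤ) - (G.dist w x : ℤ)) :
    (∀ v ∈ S, (G.dist v x : ℤ) = G.dist v u + 1) ∧ G.Adj u x := by
  push_neg at hnd
  have hne : x ≠ u := fun h => hx (h ▸ hu)
  have key : ∀ v ∈ S, (G.dist v x : ℤ) = G.dist v u + G.dist u x := by
    intro v hv
    have h := hnd v hv u hu
    simp [SimpleGraph.dist_self] at h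
    linarith
  have hpos : 1 ≤ G.dist u x := hconn.pos_dist_of_ne (Ne.symm hne)
  obtain ⟨s, hs, hadj⟩ := hS x hx
  have hds : G.dist s x = 1 := SimpleGraph.dist_eq_one_iff_adj.mpr hadj
  have h1 := key s hs
  rw [hds] at h1
  have hsu : G.dist s u = 0 := by
    have : (G.dist s u : ℤ) = 0 := by push_cast at h1 ⊢; omega
    exact_mod_cast this
  have hdx : G.dist u x = 1 := by
    have : (G.dist u x : ℤ) = 1 := by push_cast at h1 ⊢; omega
    exact_mod_cast this
  have hsu' : s = u := hconn.dist_eq_zero_iff.mp hsu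
  refine ⟨fun v hv => by rw [key v hv, hdx]; push_cast; ring, hsu' ▸ hadj⟩

theorem stmt15 {V : Type*} [Fintype V] (G : SimpleGraph V)
    (hconn : G.Connected) (hcard : 2 ≤ Fintype.card V)
    (S : Set V) (hS : isMLDSet G S) (u : V) (hu : u ∈ S)
    (x : V) (hx : x ∉ S) (hnd : ¬ setDoublyResolves G S u x) :
    G.neighborSet x ∩ S = {u} ∧
      ∀ x' : V, x' ∉ S → ¬ setDoublyResolves G S u x' → x' = x := by
  unfold setDoublyResolves doublyResolves at hnd
  obtain ⟨key, hadj⟩ := helper G hconn S hS.2 u hu x hx hnd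
  constructor
  · ext w
    simp only [Set.mem_inter_iff, SimpleGraph.mem_neighborSet, Set.mem_singleton_iff]
    constructor
    · rintro ⟨haxw, hwS⟩
      have h1 : G.dist w x = 1 := SimpleGraph.dist_eq_one_iff_adj.mpr haxw.symm
      have h2 := key w hwS
      rw [h1] at h2
      have : G.dist w u = 0 := by push_cast at h2; omega
      exact hconn.dist_eq_zero_iff.mp this
    · rintro rfl
      exact ⟨hadj.symm, hu⟩
  · intro x' hx' hnd'
    unfold setDoublyResolves doublyResolves at hnd'
    obtain ⟨key', _⟩ := helper G hconn S hS.2 u hu x' hx' hnd'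
    by_contra hne
    obtain ⟨v, hv, hdv⟩ := hS.1 x' x hne
    have := key v hv
    have := key' v hv
    omega
end
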